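/- arXiv:1708.02339 — 13 statements merged into one kernel-verified Lean document; each statement's English description precedes it below -/
import Mathlib

section
/- Let L : ℝ → ℝ be convex and differentiable, let g : ℝ → ℝ be differentiable, fix t > 0 and real numbers α < β, and for x ∈ ℝ define u(x) := min_{y ∈ [α,β]} ( t·L((x−y)/t) + g(y) ) (the minimum is attained by continuity). Fix x₀ ∈ ℝ, let M ⊆ [α,β] be the set of minimizers of y ↦ t·L((x₀−y)/t) + g(y) over [α,β], and let y* := sup M. Then: (i) y* ∈ M, i.e. the supremum of the set of minimizers is itself a minimizer; (ii) if y* lies in the open interval (α,β), then L'((x₀ − y*)/t) = g'(y*); and (iii) if moreover u is differentiable at x₀ and y* ∈ (α,β), then u'(x₀) = g'(y*). -/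
/-- Theorem 2.5: the identity `w(x,t) = g'(y*(x,t))` for the x-derivative of the
Hopf–Lax value function when the minimizer is not unique, with `y*` the greatest
minimizer (supremum of the set of minimizers over `[α,β]`). -/
theorem stmt1 (L g : ℝ → ℝ) (hLconv : ConvexOn ℝ Set.univ L)
    (hLdiff : Differentiable ℝ L) (hgdiff : Differentiable ℝ g)
    (t : ℝ) (ht : 0 < t) (α β : ℝ) (hαβ : α < β) (x₀ : ℝ) :
    let f : ℝ → ℝ → ℝ := fun x y => t * L ((x - y) / t) + g y
    let u : ℝ → ℝ := fun x => sInf (f x '' Set.Icc α β)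
    let M : Set ℝ := {y | y ∈ Set.Icc α β ∧ ∀ z ∈ Set.Icc α β, f x₀ y ≤ f x₀ z}
    let ystar : ℝ := sSup M
    ystar ∈ M ∧
    (ystar ∈ Set.Ioo α β → deriv L ((x₀ - ystar) / t) = deriv g ystar) ∧
    (ystar ∈ Set.Ioo α β → DifferentiableAt ℝ u x₀ → deriv u x₀ = deriv g ystar) := by
  intro f u M ystar
  have htne : t ≠ 0 := ne_of_gt ht
  have hfc : ∀ x, Continuous (f x) := fun x =>
    (continuous_const.mul (hLdiff.continuous.comp
      ((continuous_const.sub continuous_id).div_const t))).add hgdiff.continuous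
  have hIcc : IsCompact (Set.Icc α β) := isCompact_Icc
  have hne : (Set.Icc α β).Nonempty := ⟨α, le_refl α, hαβ.le⟩
  obtain ⟨y₀, hy₀mem, hy₀min⟩ := hIcc.exists_isMinOn hne (hfc x₀).continuousOn
  have hMne : M.Nonempty := ⟨y₀, hy₀mem, fun z hz => hy₀min hz⟩
  have hMclosed : IsClosed M := by
    have hM : M = Set.Icc α β ∩ ⋂ z ∈ Set.Icc α β, {y | f x₀ y ≤ f x₀ z} := by
      ext y
      simp only [M, Set.mem_setOf_eq, Set.mem_inter_iff, Set.mem_iInter]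
    rw [hM]
    exact isClosed_Icc.inter (isClosed_biInter fun z _ =>
      isClosed_le (hfc x₀) continuous_const)
  have hMbdd : BddAbove M := ⟨β, fun y hy => hy.1.2⟩
  have hystar : ystar ∈ M := hMclosed.csSup_mem hMne hMbdd
  have hii : ystar ∈ Set.Ioo α β → deriv L ((x₀ - ystar) / t) = deriv g ystar := by
    intro hIoo
    have hmem : Set.Icc α β ∈ nhds ystar := Icc_mem_nhds hIoo.1 hIoo.2
    have hmin : IsLocalMin (f x₀) ystar := by
      refine IsMinOn.isLocalMin ?_ hmem
      intro z hz
      exact hystar.2 z hz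
    have h1 : HasDerivAt (fun y : ℝ => (x₀ - y) / t) (-1 / t) ystar :=
      ((hasDerivAt_id ystar).const_sub x₀).div_const t
    have h2 : HasDerivAt (f x₀)
        (t * (deriv L ((x₀ - ystar) / t) * (-1 / t)) + deriv g ystar) ystar :=
      ((((hLdiff _).hasDerivAt.comp ystar h1).const_mul t)).add (hgdiff ystar).hasDerivAt
    have h0 := hmin.hasDerivAt_eq_zero h2
    field_simp at h0
    have h3 : t * (deriv g ystar - deriv L ((x₀ - ystar) / t)) = 0 := by
      linear_combination t * h0
    have h4 := (mul_eq_zero.mp h3).resolve_left htne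
    linarith
  refine ⟨hystar, hii, ?_⟩
  intro hIoo hud
  set φ : ℝ → ℝ := fun x => t * L ((x - ystar) / t) + g ystar with hφdef
  have hφd : ∀ x, HasDerivAt φ (deriv L ((x - ystar) / t)) x := by
    intro x
    have h1 : HasDerivAt (fun x : ℝ => (x - ystar) / t) (1 / t) x :=
      ((hasDerivAt_id x).sub_const ystar).div_const t
    have h2 : HasDerivAt (fun x => t * L ((x - ystar) / t))
        (t * (deriv L ((x - ystar) / t) * (1 / t))) x :=
      ((hLdiff _).hasDerivAt.comp x h1).const_mul t
    have h3 := h2.add_const (g ystar)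
    have : t * (deriv L ((x - ystar) / t) * (1 / t)) = deriv L ((x - ystar) / t) := by
      field_simp
    rwa [this] at h3
  have hbdd : ∀ x, BddBelow (f x '' Set.Icc α β) := fun x =>
    (hIcc.image_of_continuousOn (hfc x).continuousOn).bddBelow
  have hle : ∀ x, u x ≤ φ x := fun x =>
    csInf_le (hbdd x) ⟨ystar, hystar.1, rfl⟩
  have heq : u x₀ = φ x₀ := by
    refine le_antisymm (hle x₀) (le_csInf ⟨f x₀ α, ⟨α, ⟨le_refl α, hαβ.le⟩, rfl⟩⟩ ?_)
    rintro b ⟨z, hz, rfl⟩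
    exact hystar.2 z hz
  have hmax : IsLocalMax (fun x => u x - φ x) x₀ := by
    refine IsMaxOn.isLocalMax (s := Set.univ) ?_ Filter.univ_mem
    intro x _
    show u x - φ x ≤ u x₀ - φ x₀
    linarith [hle x, heq.le, heq.ge]
  have hder : HasDerivAt (fun x => u x - φ x)
      (deriv u x₀ - deriv L ((x₀ - ystar) / t)) x₀ :=
    hud.hasDerivAt.sub (hφd x₀)
  have h0 := hmax.hasDerivAt_eq_zero hder
  have := hii hIoo
  linarith
end

section
/- Fix real numbers a < 0 < b, let L : ℝ → ℝ be convex and continuous on the closed interval [a,b], and let g : ℝ → ℝ be Lipschitz. For x ∈ ℝ and t > 0 define u(x,t) := min_{y ∈ [x − b·t, x − a·t]} ( t·L((x−y)/t) + g(y) ). Then for every x ∈ ℝ and every 0 < s < t one has the dynamic programming identity u(x,t) = min_{y ∈ [x − b·(t−s), x − a·(t−s)]} ( (t−s)·L((x−y)/(t−s)) + u(y,s) ). -/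
/-- Lemma 3.3 (Lemma 1): the dynamic programming (semigroup) identity for the
Hopf–Lax formula with Legendre transform `L` finite exactly on `[a,b]`. -/
theorem stmt4 (a b : ℝ) (ha : a < 0) (hb : 0 < b) (L : ℝ → ℝ)
    (hLconv : ConvexOn ℝ (Set.Icc a b) L) (hLcont : ContinuousOn L (Set.Icc a b))
    (g : ℝ → ℝ) (hg : ∃ K : NNReal, LipschitzWith K g) :
    let u : ℝ → ℝ → ℝ := fun x t =>
      sInf ((fun y => t * L ((x - y) / t) + g y) '' Set.Icc (x - b * t) (x - a * t))
    ∀ x : ℝ, ∀ s t : ℝ, 0 < s → s < t →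
      u x t = sInf ((fun y => (t - s) * L ((x - y) / (t - s)) + u y s) ''
        Set.Icc (x - b * (t - s)) (x - a * (t - s))) := by
  intro u x s t hs hst
  obtain ⟨K, hK⟩ := hg
  have hab : a < b := ha.trans hb
  have ht : (0:ℝ) < t := hs.trans hst
  have hts : (0:ℝ) < t - s := sub_pos.mpr hst
  have ht' : t ≠ 0 := ht.ne'
  have hts' : t - s ≠ 0 := hts.ne'
  have hs' : s ≠ 0 := hs.ne'
  obtain ⟨c0, _, hmL0⟩ := isCompact_Icc.exists_isMinOn (Set.nonempty_Icc.mpr hab.le) hLcont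
  have hmL : ∀ w ∈ Set.Icc a b, L c0 ≤ L w := fun w hw => hmL0 hw
  set mL := L c0 with hmLdef
  set M := max b (-a) with hMdef
  have hbM : b ≤ M := le_max_left _ _
  have haM : -a ≤ M := le_max_right _ _
  have hIne : ∀ (x' τ : ℝ), 0 < τ → (Set.Icc (x' - b*τ) (x' - a*τ)).Nonempty := by
    intro x' τ hτ
    exact Set.nonempty_Icc.mpr (by nlinarith)
  have hmem : ∀ (x' τ y : ℝ), 0 < τ → y ∈ Set.Icc (x' - b*τ) (x' - a*τ) →
      (x' - y)/τ ∈ Set.Icc a b := by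
    intro x' τ y hτ hy
    constructor
    · rw [le_div_iff₀ hτ]; nlinarith [hy.2]
    · rw [div_le_iff₀ hτ]; nlinarith [hy.1]
  have hgb : ∀ p q : ℝ, g p - g q ≤ K * |q - p| := by
    intro p q
    have h := hK.dist_le_mul p q
    rw [Real.dist_eq, Real.dist_eq] at h
    have h1 : g p - g q ≤ |g p - g q| := le_abs_self _
    have h2 : |q - p| = |p - q| := abs_sub_comm _ _
    rw [h2]; linarith
  have habs : ∀ (x' τ y : ℝ), 0 < τ → y ∈ Set.Icc (x' - b*τ) (x' - a*τ) → |y - x'| ≤ M*τ := by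
    intro x' τ y hτ hy
    rw [abs_le]
    constructor <;> nlinarith [hy.1, hy.2]
  have key : ∀ (x' τ : ℝ), 0 < τ → ∀ v ∈ (fun y => τ * L ((x' - y)/τ) + g y) ''
      Set.Icc (x' - b*τ) (x' - a*τ), τ*mL + (g x' - K*(M*τ)) ≤ v := by
    intro x' τ hτ v hv
    obtain ⟨y, hy, rfl⟩ := hv
    have h1 : mL ≤ L ((x' - y)/τ) := hmL _ (hmem x' τ y hτ hy)
    have h2 : g x' - g y ≤ K * |y - x'| := hgb x' y
    have h3 : |y - x'| ≤ M*τ := habs x' τ y hτ hy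
    have h4 : (K:ℝ) * |y - x'| ≤ K * (M*τ) := mul_le_mul_of_nonneg_left h3 K.2
    nlinarith [mul_le_mul_of_nonneg_left h1 hτ.le]
  have hbdd : ∀ (x' τ : ℝ), 0 < τ → BddBelow ((fun y => τ * L ((x' - y)/τ) + g y) ''
      Set.Icc (x' - b*τ) (x' - a*τ)) := by
    intro x' τ hτ
    exact ⟨_, fun v hv => key x' τ hτ v hv⟩
  have hu_lb : ∀ (x' τ : ℝ), 0 < τ → τ*mL + (g x' - K*(M*τ)) ≤ u x' τ := by
    intro x' τ hτ
    exact le_csInf ((hIne x' τ hτ).image _) (key x' τ hτ)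
  have hu_ub : ∀ (x' τ z : ℝ), 0 < τ → z ∈ Set.Icc (x' - b*τ) (x' - a*τ) →
      u x' τ ≤ τ * L ((x' - z)/τ) + g z := by
    intro x' τ z hτ hz
    exact csInf_le (hbdd x' τ hτ) ⟨z, hz, rfl⟩
  apply le_antisymm
  · apply le_csInf ((hIne x (t-s) hts).image _)
    rintro v ⟨y, hy, rfl⟩
    have hinner : ∀ w ∈ (fun z => s * L ((y - z)/s) + g z) '' Set.Icc (y - b*s) (y - a*s),
        u x t - (t-s) * L ((x - y)/(t-s)) ≤ w := by
      rintro w ⟨z, hz, rfl⟩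
      have hzmem : z ∈ Set.Icc (x - b*t) (x - a*t) := by
        constructor
        · nlinarith [hy.1, hz.1]
        · nlinarith [hy.2, hz.2]
      have hc1 := hmem x (t-s) y hts hy
      have hc2 := hmem y s z hs hz
      have hconv := hLconv.2 hc1 hc2 (div_nonneg hts.le ht.le) (div_nonneg hs.le ht.le)
        (by field_simp; ring)
      have harg : ((t-s)/t) • ((x - y)/(t-s)) + (s/t) • ((y - z)/s) = (x - z)/t := by
        simp only [smul_eq_mul]
        field_simp
        ring
      rw [harg] at hconv
      simp only [smul_eq_mul] at hconv
      have hmul : t * L ((x - z)/t) ≤ (t-s) * L ((x - y)/(t-s)) + s * L ((y - z)/s) := by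
        have h5 := mul_le_mul_of_nonneg_left hconv ht.le
        calc t * L ((x - z)/t)
            ≤ t * ((t-s)/t * L ((x - y)/(t-s)) + s/t * L ((y - z)/s)) := h5
          _ = (t-s) * L ((x - y)/(t-s)) + s * L ((y - z)/s) := by field_simp
      have h6 := hu_ub x t z ht hzmem
      linarith
    have h7 : u x t - (t-s) * L ((x - y)/(t-s)) ≤ u y s :=
      le_csInf ((hIne y s hs).image _) hinner
    linarith
  · have hSbdd : BddBelow ((fun y => (t-s) * L ((x - y)/(t-s)) + u y s) ''
        Set.Icc (x - b*(t-s)) (x - a*(t-s))) := by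
      refine ⟨t*mL + (g x - K*(M*t)), ?_⟩
      rintro v ⟨y, hy, rfl⟩
      have h1 : mL ≤ L ((x - y)/(t-s)) := hmL _ (hmem x (t-s) y hts hy)
      have h2 := hu_lb y s hs
      have h3 : g x - g y ≤ K * |y - x| := hgb x y
      have h4 : |y - x| ≤ M*(t-s) := habs x (t-s) y hts hy
      have h5 : (K:ℝ) * |y - x| ≤ K * (M*(t-s)) := mul_le_mul_of_nonneg_left h4 K.2
      nlinarith [mul_le_mul_of_nonneg_left h1 hts.le]
    apply le_csInf ((hIne x t ht).image _)
    rintro v ⟨z, hz, rfl⟩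
    set y := ((t-s)*z + s*x)/t with hy
    have hymem : y ∈ Set.Icc (x - b*(t-s)) (x - a*(t-s)) := by
      constructor
      · rw [hy, le_div_iff₀ ht]; nlinarith [hz.1]
      · rw [hy, div_le_iff₀ ht]; nlinarith [hz.2]
    have hzmem : z ∈ Set.Icc (y - b*s) (y - a*s) := by
      constructor
      · rw [sub_le_iff_le_add, hy, div_le_iff₀ ht]; nlinarith [hz.1]
      · rw [le_sub_iff_add_le, hy, le_div_iff₀ ht]; nlinarith [hz.2]
    have he1 : (x - y)/(t-s) = (x - z)/t := by
      rw [hy]; field_simp; ring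
    have he2 : (y - z)/s = (x - z)/t := by
      rw [hy]; field_simp; ring
    calc sInf ((fun y => (t-s) * L ((x - y)/(t-s)) + u y s) ''
          Set.Icc (x - b*(t-s)) (x - a*(t-s)))
        ≤ (t-s) * L ((x - y)/(t-s)) + u y s := csInf_le hSbdd ⟨y, hymem, rfl⟩
      _ ≤ (t-s) * L ((x - z)/t) + (s * L ((x - z)/t) + g z) := by
          rw [he1]
          have h8 := hu_ub y s z hs hzmem
          rw [he2] at h8
          linarith
      _ = t * L ((x - z)/t) + g z := by ring
end

section
/- Fix real numbers a < 0 < b, let L : ℝ → ℝ be convex and continuous on the closed interval [a,b], let K ≥ 0, and let g : ℝ → ℝ be Lipschitz with constant K. For x ∈ ℝ and t > 0 define u(x,t) := min_{y ∈ [x − b·t, x − a·t]} ( t·L((x−y)/t) + g(y) ), and set C := max( |L(0)|, max_{z ∈ [a,b]} ( K·|z| − L(z) ) ). Then for every x ∈ ℝ and every t > 0 one has |u(x,t) − g(x)| ≤ C·t; in particular u(x,t) → g(x) as t → 0⁺. -/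
/-- Lemma 3.4 (Lemma B): the Hopf–Lax function attains the initial condition:
`|u(x,t) - g(x)| ≤ C t`, hence `u(x,t) → g(x)` as `t → 0⁺`. -/
theorem stmt5 (a b : ℝ) (ha : a < 0) (hb : 0 < b) (L : ℝ → ℝ)
    (hLconv : ConvexOn ℝ (Set.Icc a b) L) (hLcont : ContinuousOn L (Set.Icc a b))
    (K : ℝ) (hK : 0 ≤ K) (g : ℝ → ℝ) (hg : ∀ x y : ℝ, |g x - g y| ≤ K * |x - y|) :
    let u : ℝ → ℝ → ℝ := fun x t =>
      sInf ((fun y => t * L ((x - y) / t) + g y) '' Set.Icc (x - b * t) (x - a * t))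
    let C : ℝ := max |L 0| (sSup ((fun z => K * |z| - L z) '' Set.Icc a b))
    (∀ x : ℝ, ∀ t > (0 : ℝ), |u x t - g x| ≤ C * t) ∧
    (∀ x : ℝ, Filter.Tendsto (fun t => u x t) (nhdsWithin 0 (Set.Ioi 0)) (nhds (g x))) := by
  intro u C
  have hbdd : BddAbove ((fun z => K * |z| - L z) '' Set.Icc a b) := by
    have hc : ContinuousOn (fun z => K * |z| - L z) (Set.Icc a b) :=
      ((continuous_const.mul continuous_abs).continuousOn).sub hLcont
    exact (isCompact_Icc.image_of_continuousOn hc).bddAbove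
  have hCle : sSup ((fun z => K * |z| - L z) '' Set.Icc a b) ≤ C := le_max_right _ _
  have habs : ∀ x : ℝ, ∀ t > (0 : ℝ), |u x t - g x| ≤ C * t := by
    intro x t ht
    have hx_mem : x ∈ Set.Icc (x - b * t) (x - a * t) := by
      constructor <;> nlinarith
    have hlow : ∀ p ∈ (fun y => t * L ((x - y) / t) + g y) '' Set.Icc (x - b * t) (x - a * t),
        g x - C * t ≤ p := by
      rintro p ⟨y, hy, rfl⟩
      have hz_mem : (x - y) / t ∈ Set.Icc a b := by
        constructor
        · rw [le_div_iff₀ ht]; linarith [hy.2]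
        · rw [div_le_iff₀ ht]; linarith [hy.1]
      have hxy : |x - y| = t * |(x - y) / t| := by
        rw [abs_div, abs_of_pos ht]; field_simp
      have hgy : g x - g y ≤ K * |x - y| := (le_abs_self _).trans (hg x y)
      have hle : K * |(x - y) / t| - L ((x - y) / t) ≤
          sSup ((fun z => K * |z| - L z) '' Set.Icc a b) :=
        le_csSup hbdd ⟨(x - y) / t, hz_mem, rfl⟩
      simp only []
      nlinarith [hle, hCle, hgy, hxy]
    have hlb : g x - C * t ≤ u x t :=
      le_csInf ⟨_, Set.mem_image_of_mem _ hx_mem⟩ hlow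
    have hub : u x t ≤ t * L 0 + g x := by
      have hmem : t * L ((x - x) / t) + g x ∈
          (fun y => t * L ((x - y) / t) + g y) '' Set.Icc (x - b * t) (x - a * t) :=
        Set.mem_image_of_mem _ hx_mem
      have := csInf_le ⟨g x - C * t, hlow⟩ hmem
      simpa using this
    have hL0 : |L 0| ≤ C := le_max_left _ _
    rw [abs_sub_le_iff]
    constructor
    · nlinarith [le_abs_self (L 0)]
    · linarith
  refine ⟨habs, fun x => ?_⟩
  have h1 : Filter.Tendsto (fun t : ℝ => C * t) (nhdsWithin 0 (Set.Ioi 0)) (nhds 0) := by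
    have h0 : Filter.Tendsto (fun t : ℝ => C * t) (nhds 0) (nhds (C * 0)) :=
      (continuous_const.mul continuous_id).tendsto 0
    simpa using h0.mono_left nhdsWithin_le_nhds
  have h2 : Filter.Tendsto (fun t => u x t - g x) (nhdsWithin 0 (Set.Ioi 0)) (nhds 0) := by
    apply squeeze_zero_norm' ?_ h1
    filter_upwards [self_mem_nhdsWithin] with t ht
    rw [Real.norm_eq_abs]
    exact habs x t ht
  have h3 := h2.add (tendsto_const_nhds (x := g x))
  simpa using h3
end

section
/- Fix real numbers a < 0 < b, let L : ℝ → ℝ be convex and continuous on the closed interval [a,b], let K ≥ 0, and let g : ℝ → ℝ be Lipschitz with constant K. For x ∈ ℝ and t > 0 define u(x,t) := min_{y ∈ [x − b·t, x − a·t]} ( t·L((x−y)/t) + g(y) ), and set C := max( |L(0)|, max_{z ∈ [a,b]} ( K·|z| − L(z) ) ). Then for every x ∈ ℝ and all 0 < s < t one has |u(x,t) − u(x,s)| ≤ C·(t − s). -/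
/-- Lemma 3.5(a) (Lemma C, part (a)): Lipschitz continuity in time of the
Hopf–Lax function: `|u(x,t) - u(x,s)| ≤ C (t - s)` for `0 < s < t`. -/
theorem stmt6 (a b : ℝ) (ha : a < 0) (hb : 0 < b) (L : ℝ → ℝ)
    (hLconv : ConvexOn ℝ (Set.Icc a b) L) (hLcont : ContinuousOn L (Set.Icc a b))
    (K : ℝ) (hK : 0 ≤ K) (g : ℝ → ℝ) (hg : ∀ x y : ℝ, |g x - g y| ≤ K * |x - y|) :
    let u : ℝ → ℝ → ℝ := fun x t =>
      sInf ((fun y => t * L ((x - y) / t) + g y) '' Set.Icc (x - b * t) (x - a * t))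
    let C : ℝ := max |L 0| (sSup ((fun z => K * |z| - L z) '' Set.Icc a b))
    ∀ x : ℝ, ∀ s t : ℝ, 0 < s → s < t → |u x t - u x s| ≤ C * (t - s) := by
  intro u C x s t hs hst
  have ht : (0:ℝ) < t := hs.trans hst
  have hab : a ≤ b := (ha.trans hb).le
  have h0ab : (0:ℝ) ∈ Set.Icc a b := ⟨ha.le, hb.le⟩
  have hgc : Continuous g := by
    have h : LipschitzWith ⟨K, hK⟩ g := by
      apply LipschitzWith.of_dist_le_mul
      intro p q
      rw [Real.dist_eq, Real.dist_eq]
      exact hg p q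
    exact h.continuous
  have hmem : ∀ τ : ℝ, 0 < τ → ∀ y ∈ Set.Icc (x - b*τ) (x - a*τ),
      (x - y)/τ ∈ Set.Icc a b := by
    intro τ hτ y hy
    constructor
    · rw [le_div_iff₀ hτ]; linarith [hy.2]
    · rw [div_le_iff₀ hτ]; linarith [hy.1]
  have key : ∀ τ : ℝ, 0 < τ →
      (∃ yo ∈ Set.Icc (x - b*τ) (x - a*τ),
        u x τ = τ * L ((x - yo)/τ) + g yo) ∧
      (∀ y ∈ Set.Icc (x - b*τ) (x - a*τ),
        u x τ ≤ τ * L ((x - y)/τ) + g y) := by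
    intro τ hτ
    have hne : Set.Nonempty (Set.Icc (x - b*τ) (x - a*τ)) := by
      refine Set.nonempty_Icc.2 ?_
      nlinarith [mul_le_mul_of_nonneg_right hab hτ.le]
    have hcont : ContinuousOn (fun y => τ * L ((x - y)/τ) + g y)
        (Set.Icc (x - b*τ) (x - a*τ)) := by
      apply ContinuousOn.add _ hgc.continuousOn
      apply ContinuousOn.mul continuousOn_const
      apply hLcont.comp ((continuous_const.sub continuous_id).div_const τ).continuousOn
      exact fun y hy => hmem τ hτ y hy
    have hcomp := isCompact_Icc.image_of_continuousOn hcont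
    have hbdd := hcomp.bddBelow
    have hmemInf := hcomp.sInf_mem (hne.image _)
    constructor
    · obtain ⟨yo, hyo, heq⟩ := hmemInf
      exact ⟨yo, hyo, heq.symm⟩
    · intro y hy
      exact csInf_le hbdd ⟨y, hy, rfl⟩
  have hsup : ∀ z ∈ Set.Icc a b,
      K * |z| - L z ≤ sSup ((fun z => K * |z| - L z) '' Set.Icc a b) := by
    intro z hz
    have hcont : ContinuousOn (fun z => K * |z| - L z) (Set.Icc a b) :=
      (continuous_const.mul continuous_abs).continuousOn.sub hLcont
    exact le_csSup (isCompact_Icc.image_of_continuousOn hcont).bddAbove ⟨z, hz, rfl⟩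
  obtain ⟨⟨ys, hys, heqs⟩, _⟩ := key s hs
  obtain ⟨⟨yt, hyt, heqt⟩, hlet⟩ := key t ht
  obtain ⟨_, hles⟩ := key s hs
  have hC1 : |L 0| ≤ C := le_max_left _ _
  have hC2 : sSup ((fun z => K * |z| - L z) '' Set.Icc a b) ≤ C := le_max_right _ _
  -- Upper direction: u x t - u x s ≤ (t-s) |L 0|
  have hysmem_t : ys ∈ Set.Icc (x - b*t) (x - a*t) := by
    constructor
    · nlinarith [hys.1]
    · nlinarith [hys.2]
  have h1 : u x t - u x s ≤ (t - s) * |L 0| := by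
    have h2 := hlet ys hysmem_t
    have hz : (x - ys)/s ∈ Set.Icc a b := hmem s hs ys hys
    have hzt : (x - ys)/t = (s/t) * ((x - ys)/s) := by
      field_simp
    have hα : (0:ℝ) ≤ s/t := div_nonneg hs.le ht.le
    have hβ : (0:ℝ) ≤ 1 - s/t := by
      rw [sub_nonneg]
      exact div_le_one_of_le₀ hst.le ht.le
    have hconv := hLconv.2 hz h0ab hα hβ (by ring)
    simp only [smul_eq_mul, mul_zero, add_zero] at hconv
    have h3 : t * L ((x - ys)/t) ≤ s * L ((x - ys)/s) + (t - s) * L 0 := by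
      rw [hzt]
      calc t * L ((s/t) * ((x - ys)/s))
          ≤ t * ((s/t) * L ((x - ys)/s) + (1 - s/t) * L 0) :=
            mul_le_mul_of_nonneg_left hconv ht.le
        _ = s * L ((x - ys)/s) + (t - s) * L 0 := by
            field_simp
    have h5 : (t - s) * L 0 ≤ (t - s) * |L 0| :=
      mul_le_mul_of_nonneg_left (le_abs_self _) (by linarith)
    linarith [h2, h3, h5, heqs]
  -- Lower direction
  have h2' : u x s - u x t ≤ (t - s) * sSup ((fun z => K * |z| - L z) '' Set.Icc a b) := by
    set z := (x - yt)/t with hzdef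
    have hz : z ∈ Set.Icc a b := hmem t ht yt hyt
    have hy' : x - s*z ∈ Set.Icc (x - b*s) (x - a*s) := by
      constructor
      · nlinarith [hz.2]
      · nlinarith [hz.1]
    have h6 := hles (x - s*z) hy'
    have h7 : (x - (x - s*z))/s = z := by
      field_simp
      ring
    rw [h7] at h6
    have hyteq : yt = x - t*z := by
      rw [hzdef]
      field_simp
      ring
    have h8 : g (x - s*z) - g yt ≤ K * ((t - s) * |z|) := by
      have habs : |x - s*z - yt| = (t - s) * |z| := by
        rw [hyteq]
        have he : x - s*z - (x - t*z) = (t - s)*z := by ring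
        rw [he, abs_mul, abs_of_nonneg (by linarith : (0:ℝ) ≤ t - s)]
      calc g (x - s*z) - g yt ≤ |g (x - s*z) - g yt| := le_abs_self _
        _ ≤ K * |x - s*z - yt| := hg _ _
        _ = K * ((t - s) * |z|) := by rw [habs]
    have h9 := hsup z hz
    have h10 : (t - s) * (K * |z| - L z)
        ≤ (t - s) * sSup ((fun z => K * |z| - L z) '' Set.Icc a b) :=
      mul_le_mul_of_nonneg_left h9 (by linarith)
    have h11 : u x s - u x t ≤ (t - s) * (K * |z| - L z) := by
      nlinarith [h6, h8, heqt]
    linarith [h10, h11]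
  rw [abs_sub_le_iff]
  constructor
  · calc u x t - u x s ≤ (t - s) * |L 0| := h1
      _ ≤ (t - s) * C := mul_le_mul_of_nonneg_left hC1 (by linarith)
      _ = C * (t - s) := mul_comm _ _
  · calc u x s - u x t ≤ (t - s) * _ := h2'
      _ ≤ (t - s) * C := mul_le_mul_of_nonneg_left hC2 (by linarith)
      _ = C * (t - s) := mul_comm _ _
end

section
/- Fix real numbers a < 0 < b, let L : ℝ → ℝ be convex and continuous on the closed interval [a,b], let K ≥ 0, and let g : ℝ → ℝ be Lipschitz with constant K. For x ∈ ℝ and t > 0 define u(x,t) := min_{y ∈ [x − b·t, x − a·t]} ( t·L((x−y)/t) + g(y) ), and set C := max( |L(0)|, max_{z ∈ [a,b]} ( K·|z| − L(z) ) ). Then: (i) for all x, x̂ ∈ ℝ and all t, t̂ > 0 one has |u(x̂, t̂) − u(x, t)| ≤ K·|x̂ − x| + C·|t̂ − t|; and (ii) the function (x,t) ↦ u(x,t) is (totally) differentiable at Lebesgue-almost every point of ℝ × (0,∞). -/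
open MeasureTheory

private lemma sInf_le_sInf_add7 {S T : Set ℝ} (hS : S.Nonempty) (hT : BddBelow T) (c : ℝ)
    (h : ∀ s ∈ S, ∃ t ∈ T, t ≤ s + c) : sInf T ≤ sInf S + c := by
  have h2 : ∀ s ∈ S, sInf T - c ≤ s := by
    intro s hs
    obtain ⟨t, ht, hle⟩ := h s hs
    have := csInf_le hT ht
    linarith
  have := le_csInf hS h2
  linarith

/-- Lemma 3.5(b),(c) (Lemma C, parts (b) and (c)): joint Lipschitz continuity of
the Hopf–Lax function on `ℝ × (0,∞)`, and almost-everywhere (total)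
differentiability there. -/
theorem stmt7 (a b : ℝ) (ha : a < 0) (hb : 0 < b) (L : ℝ → ℝ)
    (hLconv : ConvexOn ℝ (Set.Icc a b) L) (hLcont : ContinuousOn L (Set.Icc a b))
    (K : ℝ) (hK : 0 ≤ K) (g : ℝ → ℝ) (hg : ∀ x y : ℝ, |g x - g y| ≤ K * |x - y|) :
    let u : ℝ → ℝ → ℝ := fun x t =>
      sInf ((fun y => t * L ((x - y) / t) + g y) '' Set.Icc (x - b * t) (x - a * t))
    let C : ℝ := max |L 0| (sSup ((fun z => K * |z| - L z) '' Set.Icc a b))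
    (∀ x x2 : ℝ, ∀ t > (0 : ℝ), ∀ t2 > (0 : ℝ),
      |u x2 t2 - u x t| ≤ K * |x2 - x| + C * |t2 - t|) ∧
    (∀ᵐ p : ℝ × ℝ ∂volume, 0 < p.2 →
      DifferentiableAt ℝ (fun q : ℝ × ℝ => u q.1 q.2) p) := by
  intro u C
  have hu : ∀ x t, u x t =
      sInf ((fun y => t * L ((x - y) / t) + g y) '' Set.Icc (x - b * t) (x - a * t)) :=
    fun _ _ => rfl
  set M : ℝ := sSup ((fun z => K * |z| - L z) '' Set.Icc a b) with hM
  have hCdef : C = max |L 0| M := rfl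
  -- continuity of g
  have hgc : Continuous g := by
    have : LipschitzWith (Real.toNNReal K) g := by
      apply LipschitzWith.of_dist_le_mul
      intro x y
      rw [Real.dist_eq, Real.dist_eq, Real.coe_toNNReal K hK]
      exact hg x y
    exact this.continuous
  have hab : a < b := lt_trans ha hb
  have h0mem : (0 : ℝ) ∈ Set.Icc a b := ⟨ha.le, hb.le⟩
  -- the reparametrization map lands in [a,b]
  have hmap : ∀ x t, 0 < t → ∀ y ∈ Set.Icc (x - b * t) (x - a * t), (x - y) / t ∈ Set.Icc a b := by
    intro x t ht y hy
    obtain ⟨h1, h2⟩ := hy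
    constructor
    · rw [le_div_iff₀ ht]; linarith
    · rw [div_le_iff₀ ht]; linarith
  -- continuity of the integrand
  have hfc : ∀ x t, 0 < t → ContinuousOn (fun y => t * L ((x - y) / t) + g y)
      (Set.Icc (x - b * t) (x - a * t)) := by
    intro x t ht
    apply ContinuousOn.add
    · apply ContinuousOn.mul continuousOn_const
      apply hLcont.comp
      · exact Continuous.continuousOn (by continuity)
      · intro y hy; exact hmap x t ht y hy
    · exact hgc.continuousOn
  have hIccne : ∀ x t, 0 < t → (Set.Icc (x - b * t) (x - a * t)).Nonempty := by
    intro x t ht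
    apply Set.nonempty_Icc.mpr
    nlinarith
  have hne : ∀ x t, 0 < t →
      ((fun y => t * L ((x - y) / t) + g y) '' Set.Icc (x - b * t) (x - a * t)).Nonempty := by
    intro x t ht
    exact (hIccne x t ht).image _
  have hbdd : ∀ x t, 0 < t →
      BddBelow ((fun y => t * L ((x - y) / t) + g y) '' Set.Icc (x - b * t) (x - a * t)) := by
    intro x t ht
    exact (isCompact_Icc.image_of_continuousOn (hfc x t ht)).bddBelow
  -- bound for M
  have hMle : ∀ z ∈ Set.Icc a b, K * |z| - L z ≤ M := by
    intro z hz
    apply le_csSup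
    · apply IsCompact.bddAbove
      apply isCompact_Icc.image_of_continuousOn
      exact ContinuousOn.sub (Continuous.continuousOn (by continuity)) hLcont
    · exact Set.mem_image_of_mem _ hz
  have hMC : M ≤ C := le_max_right _ _
  have hL0C : |L 0| ≤ C := le_max_left _ _
  have hC0 : (0 : ℝ) ≤ C := le_trans (abs_nonneg _) hL0C
  -- space Lipschitz (one-sided)
  have hx : ∀ x x2 t, 0 < t → u x2 t ≤ u x t + K * |x2 - x| := by
    intro x x2 t ht
    rw [hu, hu]
    apply sInf_le_sInf_add7 (hne x t ht) (hbdd x2 t ht)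
    rintro s ⟨y, hy, rfl⟩
    refine ⟨t * L ((x2 - (y + (x2 - x))) / t) + g (y + (x2 - x)),
      Set.mem_image_of_mem _ ⟨by linarith [hy.1], by linarith [hy.2]⟩, ?_⟩
    have e1 : x2 - (y + (x2 - x)) = x - y := by ring
    rw [e1]
    have h2 := hg (y + (x2 - x)) y
    have e2 : y + (x2 - x) - y = x2 - x := by ring
    rw [e2] at h2
    have := abs_le.mp h2
    linarith [this.2]
  -- time Lipschitz claim 1: shrink time
  have htime1 : ∀ x t t2, 0 < t → 0 < t2 → t ≤ t2 → u x t ≤ u x t2 + C * (t2 - t) := by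
    intro x t t2 ht ht2 htt
    rw [hu, hu]
    apply sInf_le_sInf_add7 (hne x t2 ht2) (hbdd x t ht)
    rintro s ⟨y2, hy2, rfl⟩
    set z : ℝ := (x - y2) / t2 with hz
    have hzmem : z ∈ Set.Icc a b := hmap x t2 ht2 y2 hy2
    have hy2eq : y2 = x - t2 * z := by
      rw [hz, mul_comm, div_mul_cancel₀ _ ht2.ne']; ring
    have hymem : x - t * z ∈ Set.Icc (x - b * t) (x - a * t) := by
      constructor
      · nlinarith [hzmem.2]
      · nlinarith [hzmem.1]
    refine ⟨t * L ((x - (x - t * z)) / t) + g (x - t * z), Set.mem_image_of_mem _ hymem, ?_⟩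
    have e1 : (x - (x - t * z)) / t = z := by
      field_simp
      ring
    rw [e1]
    have hgb := hg (x - t * z) (x - t2 * z)
    have e2 : x - t * z - (x - t2 * z) = (t2 - t) * z := by ring
    rw [e2, abs_mul, abs_of_nonneg (by linarith : (0:ℝ) ≤ t2 - t)] at hgb
    have hgb2 := (abs_le.mp hgb).2
    have hMz : K * |z| - L z ≤ M := hMle z hzmem
    have hmul : (t2 - t) * (K * |z| - L z) ≤ (t2 - t) * C :=
      mul_le_mul_of_nonneg_left (le_trans hMz hMC) (by linarith)
    show t * L z + g (x - t * z) ≤ t2 * L ((x - y2) / t2) + g y2 + C * (t2 - t)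
    rw [← hz, hy2eq]
    nlinarith
  -- time Lipschitz claim 2: grow time (uses convexity)
  have htime2 : ∀ x t t2, 0 < t → 0 < t2 → t ≤ t2 → u x t2 ≤ u x t + C * (t2 - t) := by
    intro x t t2 ht ht2 htt
    rw [hu, hu]
    apply sInf_le_sInf_add7 (hne x t ht) (hbdd x t2 ht2)
    rintro s ⟨y, hy, rfl⟩
    set z : ℝ := (x - y) / t with hz
    have hzmem : z ∈ Set.Icc a b := hmap x t ht y hy
    have hxy : x - y = t * z := by
      rw [hz, mul_comm, div_mul_cancel₀ _ ht.ne']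
    have hymem2 : y ∈ Set.Icc (x - b * t2) (x - a * t2) := by
      constructor
      · nlinarith [hzmem.2]
      · nlinarith [hzmem.1]
    refine ⟨t2 * L ((x - y) / t2) + g y, Set.mem_image_of_mem _ hymem2, ?_⟩
    have hs : (0:ℝ) ≤ t / t2 := by positivity
    have hr : (0:ℝ) ≤ 1 - t / t2 := by
      rw [sub_nonneg, div_le_one ht2]; exact htt
    have hsum : t / t2 + (1 - t / t2) = 1 := by ring
    have hconv := hLconv.2 hzmem h0mem hs hr hsum
    simp only [smul_eq_mul, mul_zero, add_zero] at hconv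
    have e1 : (x - y) / t2 = (t / t2) * z := by
      rw [hxy]; ring
    have h2 : t2 * L (t / t2 * z) ≤ t2 * (t / t2 * L z + (1 - t / t2) * L 0) :=
      mul_le_mul_of_nonneg_left hconv ht2.le
    have e2 : t2 * (t / t2 * L z + (1 - t / t2) * L 0) = t * L z + (t2 - t) * L 0 := by
      field_simp
    have hL0 : L 0 ≤ |L 0| := le_abs_self _
    have h3 : (t2 - t) * L 0 ≤ (t2 - t) * C :=
      mul_le_mul_of_nonneg_left (le_trans hL0 hL0C) (by linarith)
    show t2 * L ((x - y) / t2) + g y ≤ t * L ((x - y) / t) + g y + C * (t2 - t)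
    rw [e1, ← hz]
    linarith
  -- combined time Lipschitz
  have htime : ∀ x t t2, 0 < t → 0 < t2 → |u x t2 - u x t| ≤ C * |t2 - t| := by
    intro x t t2 ht ht2
    rcases le_total t t2 with h | h
    · rw [abs_of_nonneg (by linarith : (0:ℝ) ≤ t2 - t)]
      have h1 := htime1 x t t2 ht ht2 h
      have h2 := htime2 x t t2 ht ht2 h
      rw [abs_le]
      constructor <;> linarith
    · rw [abs_of_nonpos (by linarith : t2 - t ≤ 0)]
      have h1 := htime1 x t2 t ht2 ht h
      have h2 := htime2 x t2 t ht2 ht h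
      rw [abs_le]
      constructor <;> linarith
  have hspace : ∀ x x2 t, 0 < t → |u x2 t - u x t| ≤ K * |x2 - x| := by
    intro x x2 t ht
    have h1 := hx x x2 t ht
    have h2 := hx x2 x t ht
    rw [abs_sub_comm x x2] at h2
    rw [abs_le]
    constructor <;> linarith
  -- part (i)
  have main : ∀ x x2 : ℝ, ∀ t > (0 : ℝ), ∀ t2 > (0 : ℝ),
      |u x2 t2 - u x t| ≤ K * |x2 - x| + C * |t2 - t| := by
    intro x x2 t ht t2 ht2
    have h1 := htime x2 t t2 ht ht2
    have h2 := hspace x x2 t ht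
    have h3 := abs_sub_le (u x2 t2) (u x2 t) (u x t)
    linarith
  refine ⟨main, ?_⟩
  -- part (ii)
  have hcpos : ∀ n : ℕ, (0:ℝ) < 1 / (n + 1) := by
    intro n; positivity
  have hlip : ∀ n : ℕ, LipschitzWith (Real.toNNReal (K + C))
      (fun q : ℝ × ℝ => u q.1 (max q.2 (1 / (n + 1)))) := by
    intro n
    apply LipschitzWith.of_dist_le_mul
    intro p q
    rw [Real.coe_toNNReal _ (by linarith), Prod.dist_eq, Real.dist_eq, Real.dist_eq,
      Real.dist_eq]
    have hp : (0:ℝ) < max q.2 (1 / (n + 1)) := lt_max_of_lt_right (hcpos n)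
    have hq : (0:ℝ) < max p.2 (1 / (n + 1)) := lt_max_of_lt_right (hcpos n)
    have h1 := main q.1 p.1 (max q.2 (1 / (n + 1))) hp (max p.2 (1 / (n + 1))) hq
    have h2 : |max p.2 (1 / (n + 1) : ℝ) - max q.2 (1 / (n + 1))| ≤ |p.2 - q.2| :=
      abs_max_sub_max_le_abs _ _ _
    have h3 : |p.1 - q.1| ≤ max |p.1 - q.1| |p.2 - q.2| := le_max_left _ _
    have h4 : |p.2 - q.2| ≤ max |p.1 - q.1| |p.2 - q.2| := le_max_right _ _
    have h5 : K * |p.1 - q.1| ≤ K * max |p.1 - q.1| |p.2 - q.2| :=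
      mul_le_mul_of_nonneg_left h3 hK
    have h6 : C * |max p.2 (1 / (n + 1) : ℝ) - max q.2 (1 / (n + 1))| ≤
        C * max |p.1 - q.1| |p.2 - q.2| :=
      mul_le_mul_of_nonneg_left (le_trans h2 h4) hC0
    calc |u p.1 (max p.2 (1 / (n + 1))) - u q.1 (max q.2 (1 / (n + 1)))|
        ≤ K * |p.1 - q.1| + C * |max p.2 (1 / (n + 1) : ℝ) - max q.2 (1 / (n + 1))| := h1
      _ ≤ (K + C) * (max |p.1 - q.1| |p.2 - q.2|) := by linarith
  have hae : ∀ᵐ p : ℝ × ℝ ∂volume, ∀ n : ℕ,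
      DifferentiableAt ℝ (fun q : ℝ × ℝ => u q.1 (max q.2 (1 / (n + 1)))) p := by
    rw [ae_all_iff]
    intro n
    exact (hlip n).ae_differentiableAt
  filter_upwards [hae] with p hp hpos
  obtain ⟨n, hn⟩ := exists_nat_one_div_lt hpos
  have heq : (fun q : ℝ × ℝ => u q.1 (max q.2 (1 / (n + 1)))) =ᶠ[nhds p]
      (fun q : ℝ × ℝ => u q.1 q.2) := by
    have hmem : {q : ℝ × ℝ | 1 / (n + 1 : ℝ) < q.2} ∈ nhds p :=
      (isOpen_lt continuous_const continuous_snd).mem_nhds hn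
    filter_upwards [hmem] with q hq
    rw [max_eq_left (le_of_lt hq)]
  exact heq.differentiableAt_iff.mp (hp n)
end

section
/- Fix real numbers a < 0 < b, let L : ℝ → ℝ be convex and continuous on the closed interval [a,b], and let g : ℝ → ℝ be Lipschitz. For x ∈ ℝ and t > 0 define u(x,t) := min_{y ∈ [x − b·t, x − a·t]} ( t·L((x−y)/t) + g(y) ), and define H : ℝ → ℝ by H(v) := max_{p ∈ [a,b]} ( v·p − L(p) ). If u (as a function on ℝ × (0,∞)) is differentiable at a point (x₀, t₀) with t₀ > 0, then ∂_t u(x₀,t₀) + H( ∂_x u(x₀,t₀) ) = 0. -/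
set_option maxHeartbeats 800000 in
/-- Theorem 3.6 (Theorem 5): the Hopf–Lax function satisfies the Hamilton–Jacobi
equation `u_t + H(u_x) = 0` at every point of (total) differentiability, where
`H(v) = max_{p ∈ [a,b]} (v p - L(p))` is the polygonal flux. -/
theorem stmt8 (a b : ℝ) (ha : a < 0) (hb : 0 < b) (L : ℝ → ℝ)
    (hLconv : ConvexOn ℝ (Set.Icc a b) L) (hLcont : ContinuousOn L (Set.Icc a b))
    (g : ℝ → ℝ) (hg : ∃ K : NNReal, LipschitzWith K g) :
    let u : ℝ → ℝ → ℝ := fun x t =>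
      sInf ((fun y => t * L ((x - y) / t) + g y) '' Set.Icc (x - b * t) (x - a * t))
    let H : ℝ → ℝ := fun v => sSup ((fun p => v * p - L p) '' Set.Icc a b)
    let U : ℝ × ℝ → ℝ := fun q => u q.1 q.2
    ∀ x₀ t₀ : ℝ, 0 < t₀ → DifferentiableAt ℝ U (x₀, t₀) →
      fderiv ℝ U (x₀, t₀) (0, 1) + H (fderiv ℝ U (x₀, t₀) (1, 0)) = 0 := by
  intro u H U x₀ t₀ ht₀ hdiff
  obtain ⟨K, hgL⟩ := hg
  have hgc : Continuous g := hgL.continuous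
  have hab : a ≤ b := le_of_lt (ha.trans hb)
  -- Key: minimizer exists
  have key : ∀ x t : ℝ, 0 < t → ∃ y₀ ∈ Set.Icc (x - b * t) (x - a * t),
      u x t = t * L ((x - y₀) / t) + g y₀ ∧
      ∀ y ∈ Set.Icc (x - b * t) (x - a * t), u x t ≤ t * L ((x - y) / t) + g y := by
    intro x t ht
    have hne : (Set.Icc (x - b * t) (x - a * t)).Nonempty := by
      refine Set.nonempty_Icc.2 ?_
      nlinarith
    have hmaps : Set.MapsTo (fun y => (x - y) / t) (Set.Icc (x - b * t) (x - a * t))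
        (Set.Icc a b) := by
      intro y hy
      obtain ⟨h1, h2⟩ := hy
      constructor
      · rw [le_div_iff₀ ht]; linarith
      · rw [div_le_iff₀ ht]; linarith
    have hcont : ContinuousOn (fun y => t * L ((x - y) / t) + g y)
        (Set.Icc (x - b * t) (x - a * t)) := by
      refine ContinuousOn.add ?_ hgc.continuousOn
      refine continuousOn_const.mul ?_
      exact hLcont.comp ((continuous_const.sub continuous_id).div_const t).continuousOn hmaps
    obtain ⟨y₀, hy₀, hmin⟩ := isCompact_Icc.exists_isMinOn hne hcont
    have hleast : IsLeast ((fun y => t * L ((x - y) / t) + g y) ''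
        Set.Icc (x - b * t) (x - a * t)) (t * L ((x - y₀) / t) + g y₀) := by
      constructor
      · exact Set.mem_image_of_mem _ hy₀
      · rintro _ ⟨y, hy, rfl⟩
        exact hmin hy
    refine ⟨y₀, hy₀, hleast.csInf_eq, ?_⟩
    intro y hy
    exact hleast.csInf_eq.trans_le (hmin hy)
  -- minimizer at (x₀, t₀)
  obtain ⟨y₀, hy₀, huy₀, hub₀⟩ := key x₀ t₀ ht₀
  set p₀ : ℝ := (x₀ - y₀) / t₀ with hp₀def
  have hp₀mem : p₀ ∈ Set.Icc a b := by
    obtain ⟨h1, h2⟩ := hy₀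
    constructor
    · rw [hp₀def, le_div_iff₀ ht₀]; linarith
    · rw [hp₀def, div_le_iff₀ ht₀]; linarith
  have hxy : x₀ - y₀ = t₀ * p₀ := by
    rw [hp₀def]; field_simp
  -- the fderiv
  set f := fderiv ℝ U (x₀, t₀) with hf
  have hUf : HasFDerivAt U f (x₀, t₀) := hdiff.hasFDerivAt
  -- directional derivatives
  have dirderiv : ∀ v : ℝ × ℝ, HasDerivAt (fun s : ℝ => U ((x₀, t₀) + s • v)) (f v) 0 := by
    intro v
    have hc : HasDerivAt (fun s : ℝ => (x₀, t₀) + s • v) v 0 := by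
      simpa using ((hasDerivAt_id (0:ℝ)).smul_const v).const_add (x₀, t₀)
    have hUf' : HasFDerivAt U f ((x₀, t₀) + (0:ℝ) • v) := by simpa using hUf
    have := hUf'.comp_hasDerivAt 0 hc
    exact this
  -- Part A : for all p ∈ [a,b],  f (p,1) ≤ L p
  have partA : ∀ p ∈ Set.Icc a b, f (p, 1) ≤ L p := by
    intro p hp
    have ineq : ∀ s : ℝ, 0 < s → U ((x₀, t₀) + s • (p, 1)) ≤ U (x₀, t₀) + s * L p := by
      intro s hs
      have hts : 0 < t₀ + s := by linarith
      obtain ⟨_, _, _, hub⟩ := key (x₀ + s * p) (t₀ + s) hts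
      have hy₀mem : y₀ ∈ Set.Icc (x₀ + s * p - b * (t₀ + s)) (x₀ + s * p - a * (t₀ + s)) := by
        obtain ⟨h1, h2⟩ := hy₀
        obtain ⟨hpa, hpb⟩ := hp
        constructor
        · nlinarith
        · nlinarith
      have h1 := hub y₀ hy₀mem
      have hr : (x₀ + s * p - y₀) / (t₀ + s)
          = (s / (t₀ + s)) * p + (t₀ / (t₀ + s)) * p₀ := by
        field_simp
        nlinarith [hxy]
      have hconv := hLconv.2 hp hp₀mem (le_of_lt (div_pos hs hts))
        (le_of_lt (div_pos ht₀ hts)) (by field_simp; ring)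
      rw [smul_eq_mul, smul_eq_mul, ← hr] at hconv
      have h2 : (t₀ + s) * L ((x₀ + s * p - y₀) / (t₀ + s)) ≤ s * L p + t₀ * L p₀ := by
        have h3 := mul_le_mul_of_nonneg_left hconv (le_of_lt hts)
        calc (t₀ + s) * L ((x₀ + s * p - y₀) / (t₀ + s))
            ≤ (t₀ + s) * (s / (t₀ + s) * L p + t₀ / (t₀ + s) * L p₀) := h3
          _ = s * L p + t₀ * L p₀ := by field_simp
      have hU0 : U (x₀, t₀) = t₀ * L p₀ + g y₀ := by
        have : (x₀ - y₀) / t₀ = p₀ := hp₀def.symm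
        simpa [U, this] using huy₀
      have hUs : U ((x₀, t₀) + s • (p, 1)) = u (x₀ + s * p) (t₀ + s) := by
        simp [U, Prod.smul_mk, smul_eq_mul, mul_comm]
      rw [hUs, hU0]
      calc u (x₀ + s * p) (t₀ + s)
          ≤ (t₀ + s) * L ((x₀ + s * p - y₀) / (t₀ + s)) + g y₀ := h1
        _ ≤ s * L p + t₀ * L p₀ + g y₀ := by linarith
        _ = t₀ * L p₀ + g y₀ + s * L p := by ring
    have hd := dirderiv (p, 1)
    rw [hasDerivAt_iff_tendsto_slope] at hd
    have hd' : Filter.Tendsto (slope (fun s : ℝ => U ((x₀, t₀) + s • (p, 1))) 0)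
        (nhdsWithin 0 (Set.Ioi 0)) (nhds (f (p, 1))) :=
      hd.mono_left (nhdsWithin_mono _ (fun x hx => ne_of_gt hx))
    refine le_of_tendsto hd' ?_
    filter_upwards [self_mem_nhdsWithin] with s hs
    have hs' : (0:ℝ) < s := hs
    rw [slope_def_field]
    simp only [zero_smul, add_zero, sub_zero]
    rw [div_le_iff₀ hs']
    nlinarith [ineq s hs']
  -- Part B : f (p₀, 1) ≥ L p₀
  have partB : L p₀ ≤ f (p₀, 1) := by
    have ineq : ∀ s : ℝ, 0 < s → s < t₀ →
        U ((x₀, t₀) + s • (-p₀, -1)) ≤ U (x₀, t₀) - s * L p₀ := by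
      intro s hs hst
      have hts : 0 < t₀ - s := by linarith
      obtain ⟨_, _, _, hub⟩ := key (x₀ - s * p₀) (t₀ - s) hts
      have hy₀mem : y₀ ∈ Set.Icc (x₀ - s * p₀ - b * (t₀ - s)) (x₀ - s * p₀ - a * (t₀ - s)) := by
        obtain ⟨hpa, hpb⟩ := hp₀mem
        constructor
        · nlinarith [hxy]
        · nlinarith [hxy]
      have h1 := hub y₀ hy₀mem
      have hr : (x₀ - s * p₀ - y₀) / (t₀ - s) = p₀ := by
        rw [div_eq_iff (ne_of_gt hts)]
        nlinarith [hxy]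
      rw [hr] at h1
      have hU0 : U (x₀, t₀) = t₀ * L p₀ + g y₀ := by
        have : (x₀ - y₀) / t₀ = p₀ := hp₀def.symm
        simpa [U, this] using huy₀
      have hUs : U ((x₀, t₀) + s • (-p₀, -1)) = u (x₀ - s * p₀) (t₀ - s) := by
        simp [U, Prod.smul_mk, smul_eq_mul]
        ring_nf
      rw [hUs, hU0]
      calc u (x₀ - s * p₀) (t₀ - s)
          ≤ (t₀ - s) * L p₀ + g y₀ := h1
        _ = t₀ * L p₀ + g y₀ - s * L p₀ := by ring
    have hd := dirderiv (-p₀, -1)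
    rw [hasDerivAt_iff_tendsto_slope] at hd
    have hd' : Filter.Tendsto (slope (fun s : ℝ => U ((x₀, t₀) + s • ((-p₀ : ℝ), (-1 : ℝ)))) 0)
        (nhdsWithin 0 (Set.Ioi 0)) (nhds (f (-p₀, -1))) :=
      hd.mono_left (nhdsWithin_mono _ (fun x hx => ne_of_gt hx))
    have hle : f (-p₀, -1) ≤ -L p₀ := by
      refine le_of_tendsto hd' ?_
      filter_upwards [Ioo_mem_nhdsGT_of_mem (Set.left_mem_Ico.2 ht₀)] with s hs
      obtain ⟨hs1, hs2⟩ := hs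
      rw [slope_def_field]
      simp only [zero_smul, add_zero, sub_zero]
      rw [div_le_iff₀ hs1]
      nlinarith [ineq s hs1 hs2]
    have hneg : f (-p₀, -1) = -f (p₀, 1) := by
      have : ((-p₀ : ℝ), (-1 : ℝ)) = -((p₀ : ℝ), (1 : ℝ)) := by simp [Prod.ext_iff]
      rw [this, map_neg]
    rw [hneg] at hle
    linarith
  -- decompose f (p,1) = p * f(1,0) + f(0,1)
  set ux := f (1, 0) with hux
  set ut := f (0, 1) with hut
  have hdecomp : ∀ p : ℝ, f (p, 1) = p * ux + ut := by
    intro p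
    have : ((p : ℝ), (1 : ℝ)) = p • ((1 : ℝ), (0 : ℝ)) + ((0 : ℝ), (1 : ℝ)) := by
      simp [Prod.ext_iff]
    rw [this, map_add, map_smul, smul_eq_mul]
  -- conclude
  have hHle : H ux ≤ -ut := by
    refine csSup_le ?_ ?_
    · exact (Set.nonempty_Icc.2 hab).image _
    · rintro _ ⟨p, hp, rfl⟩
      have := partA p hp
      rw [hdecomp p] at this
      show ux * p - L p ≤ -ut
      nlinarith
  have hHge : -ut ≤ H ux := by
    have hbdd : BddAbove ((fun p => ux * p - L p) '' Set.Icc a b) := by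
      refine ⟨-ut, ?_⟩
      rintro _ ⟨p, hp, rfl⟩
      have := partA p hp
      rw [hdecomp p] at this
      show ux * p - L p ≤ -ut
      nlinarith
    have hmem : ux * p₀ - L p₀ ∈ (fun p => ux * p - L p) '' Set.Icc a b :=
      Set.mem_image_of_mem _ hp₀mem
    have h1 : ux * p₀ - L p₀ ≤ H ux := le_csSup hbdd hmem
    have h2 := partB
    rw [hdecomp p₀] at h2
    nlinarith
  have : H ux = -ut := le_antisymm hHle hHge
  rw [this]
  ring
end

section
/- Fix real numbers a < 0 < b, let L : ℝ → ℝ be convex and continuous on the closed interval [a,b], and let g : ℝ → ℝ be Lipschitz. For x ∈ ℝ and t > 0 define u(x,t) := min_{y ∈ [x − b·t, x − a·t]} ( t·L((x−y)/t) + g(y) ), and define H : ℝ → ℝ by H(v) := max_{p ∈ [a,b]} ( v·p − L(p) ). Then: (i) for Lebesgue-almost every (x,t) ∈ ℝ × (0,∞), u is differentiable at (x,t) and ∂_t u(x,t) + H( ∂_x u(x,t) ) = 0; and (ii) for every x ∈ ℝ, u(x,t) → g(x) as t → 0⁺. -/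
open MeasureTheory Set

namespace HLaux

/-- The Hopf–Lax function. -/
noncomputable def u (L g : ℝ → ℝ) (a b x t : ℝ) : ℝ :=
  sInf ((fun y => t * L ((x - y) / t) + g y) '' Set.Icc (x - b * t) (x - a * t))

variable {a b : ℝ} {L g : ℝ → ℝ} {K : NNReal}

lemma mem_interval_iff {x t y : ℝ} (ht : 0 < t) :
    y ∈ Icc (x - b * t) (x - a * t) ↔ (x - y) / t ∈ Icc a b := by
  rw [mem_Icc, mem_Icc, le_div_iff₀ ht, div_le_iff₀ ht]
  constructor <;> rintro ⟨h1, h2⟩ <;> constructor <;> nlinarith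

lemma contOn (hLcont : ContinuousOn L (Icc a b)) (hgc : Continuous g)
    {t : ℝ} (ht : 0 < t) (x : ℝ) :
    ContinuousOn (fun y => t * L ((x - y) / t) + g y) (Icc (x - b * t) (x - a * t)) := by
  apply ContinuousOn.add _ hgc.continuousOn
  apply ContinuousOn.mul continuousOn_const
  apply hLcont.comp ((continuous_const.sub continuous_id).div_const t).continuousOn
  intro y hy
  exact (mem_interval_iff ht).1 hy

lemma isLeast_u (hab : a ≤ b) (hLcont : ContinuousOn L (Icc a b)) (hgc : Continuous g)
    {t : ℝ} (ht : 0 < t) (x : ℝ) :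
    IsLeast ((fun y => t * L ((x - y) / t) + g y) '' Icc (x - b * t) (x - a * t))
      (u L g a b x t) := by
  have hne : (Icc (x - b * t) (x - a * t)).Nonempty := nonempty_Icc.2 (by nlinarith)
  obtain ⟨z, hz⟩ := (isCompact_Icc.image_of_continuousOn (contOn hLcont hgc ht x)).exists_isLeast
    (hne.image _)
  rw [u, hz.csInf_eq]
  exact hz

lemma u_le (hab : a ≤ b) (hLcont : ContinuousOn L (Icc a b)) (hgc : Continuous g)
    {t : ℝ} (ht : 0 < t) {x y : ℝ} (hy : y ∈ Icc (x - b * t) (x - a * t)) :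
    u L g a b x t ≤ t * L ((x - y) / t) + g y :=
  (isLeast_u hab hLcont hgc ht x).2 (mem_image_of_mem _ hy)

lemma exists_min (hab : a ≤ b) (hLcont : ContinuousOn L (Icc a b)) (hgc : Continuous g)
    {t : ℝ} (ht : 0 < t) (x : ℝ) :
    ∃ y ∈ Icc (x - b * t) (x - a * t), u L g a b x t = t * L ((x - y) / t) + g y := by
  obtain ⟨y, hy, hEq⟩ := (isLeast_u hab hLcont hgc ht x).1
  exact ⟨y, hy, hEq.symm⟩

lemma semigroup (hab : a ≤ b) (hLconv : ConvexOn ℝ (Icc a b) L)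
    (hLcont : ContinuousOn L (Icc a b)) (hgc : Continuous g)
    {x t w s : ℝ} (hs : 0 < s) (hst : s < t)
    (hq : (x - w) / (t - s) ∈ Icc a b) :
    u L g a b x t ≤ (t - s) * L ((x - w) / (t - s)) + u L g a b w s := by
  obtain ⟨y, hy, hEq⟩ := exists_min hab hLcont hgc hs w
  set q1 := (x - w) / (t - s) with hq1def
  set q2 := (w - y) / s with hq2def
  have ht : 0 < t := hs.trans hst
  have hq2 : q2 ∈ Icc a b := (mem_interval_iff hs).1 hy
  have htne : t ≠ 0 := ne_of_gt ht
  have hsne : s ≠ 0 := ne_of_gt hs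
  have htsne : t - s ≠ 0 := ne_of_gt (by linarith)
  have hkey : (x - y) / t = ((t - s) / t) * q1 + (s / t) * q2 := by
    rw [hq1def, hq2def]; field_simp; ring
  have hα : (0:ℝ) ≤ (t - s) / t := div_nonneg (by linarith) ht.le
  have hβ : (0:ℝ) ≤ s / t := by positivity
  have hαβ : (t - s) / t + s / t = 1 := by field_simp; ring
  have hmemq : (x - y) / t ∈ Icc a b := by
    rw [hkey, ← smul_eq_mul, ← smul_eq_mul]
    exact (convex_Icc a b) hq hq2 hα hβ hαβ
  have hymem : y ∈ Icc (x - b * t) (x - a * t) := (mem_interval_iff ht).2 hmemq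
  have h1 : u L g a b x t ≤ t * L ((x - y) / t) + g y := u_le hab hLcont hgc ht hymem
  have h2 : L ((x - y) / t) ≤ ((t - s) / t) * L q1 + (s / t) * L q2 := by
    rw [hkey]
    have := hLconv.2 hq hq2 hα hβ hαβ
    simpa [smul_eq_mul] using this
  have h3 : t * (((t - s) / t) * L q1 + (s / t) * L q2) = (t - s) * L q1 + s * L q2 := by
    field_simp
  have h4 : t * L ((x - y) / t) ≤ (t - s) * L q1 + s * L q2 := by
    nlinarith [mul_le_mul_of_nonneg_left h2 ht.le]
  have h5 : u L g a b w s = s * L q2 + g y := hEq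
  linarith

lemma lip_x (hab : a ≤ b) (hLcont : ContinuousOn L (Icc a b)) (hg : LipschitzWith K g)
    {t : ℝ} (ht : 0 < t) (x x' : ℝ) :
    u L g a b x' t ≤ u L g a b x t + K * |x' - x| := by
  obtain ⟨y, hy, hEq⟩ := exists_min hab hLcont hg.continuous ht x
  have hy' : y + (x' - x) ∈ Icc (x' - b * t) (x' - a * t) := by
    rw [mem_interval_iff ht]
    have h : (x' - (y + (x' - x))) / t = (x - y) / t := by ring_nf
    rw [h]
    exact (mem_interval_iff ht).1 hy
  have h1 := u_le hab hLcont hg.continuous ht hy'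
  have h2 : (x' - (y + (x' - x))) / t = (x - y) / t := by ring_nf
  rw [h2] at h1
  have h3 : g (y + (x' - x)) ≤ g y + K * |x' - x| := by
    have := hg.dist_le_mul (y + (x' - x)) y
    rw [Real.dist_eq, Real.dist_eq] at this
    have h4 : |g (y + (x' - x)) - g y| ≤ K * |x' - x| := by
      calc |g (y + (x' - x)) - g y| ≤ K * |y + (x' - x) - y| := this
        _ = K * |x' - x| := by rw [show y + (x' - x) - y = x' - x by ring]
    cases abs_le.1 h4 with
    | intro hl hr => linarith
  linarith

lemma lip_x_abs (hab : a ≤ b) (hLcont : ContinuousOn L (Icc a b)) (hg : LipschitzWith K g)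
    {t : ℝ} (ht : 0 < t) (x x' : ℝ) :
    |u L g a b x t - u L g a b x' t| ≤ K * |x - x'| := by
  rw [abs_sub_le_iff]
  have habs : |x' - x| = |x - x'| := abs_sub_comm x' x
  constructor
  · have := lip_x hab hLcont hg ht x' x
    linarith
  · have := lip_x hab hLcont hg ht x x'
    rw [habs] at this
    linarith


lemma abs_le_r {q : ℝ} (hq : q ∈ Icc a b) : |q| ≤ max b (-a) := by
  rw [abs_le]
  rcases hq with ⟨h1, h2⟩
  constructor
  · have : -a ≤ max b (-a) := le_max_right _ _
    linarith
  · exact h2.trans (le_max_left _ _)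

lemma lip_t (ha : a < 0) (hb : 0 < b) (hLconv : ConvexOn ℝ (Icc a b) L)
    (hLcont : ContinuousOn L (Icc a b)) (hg : LipschitzWith K g)
    {C0 : ℝ} (hC0 : ∀ p ∈ Icc a b, |L p| ≤ C0)
    {s t : ℝ} (hs : 0 < s) (hst : s ≤ t) (x : ℝ) :
    |u L g a b x t - u L g a b x s| ≤ (C0 + K * max b (-a)) * (t - s) := by
  have hab : a ≤ b := le_of_lt (ha.trans hb)
  have ht : 0 < t := lt_of_lt_of_le hs hst
  have hr : (0:ℝ) ≤ max b (-a) := le_trans hb.le (le_max_left _ _)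
  have hC0nn : (0:ℝ) ≤ C0 := le_trans (abs_nonneg _) (hC0 0 ⟨ha.le, hb.le⟩)
  rcases eq_or_lt_of_le hst with rfl | hlt
  · simp [abs_nonneg]
  rw [abs_sub_le_iff]
  constructor
  · -- u x t - u x s ≤ (t-s) * L 0
    have h0 : (x - x) / (t - s) ∈ Icc a b := by
      rw [show (x - x) / (t - s) = 0 by simp]
      exact ⟨ha.le, hb.le⟩
    have := semigroup hab hLconv hLcont hg.continuous hs hlt h0
    rw [show (x - x) / (t - s) = 0 by simp] at this
    have hL0 := hC0 0 ⟨ha.le, hb.le⟩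
    have h1 : L 0 ≤ C0 := (abs_le.1 hL0).2
    have e1 : (t - s) * L 0 ≤ (t - s) * C0 :=
      mul_le_mul_of_nonneg_left h1 (by linarith)
    have e2 : (0:ℝ) ≤ (K : ℝ) * max b (-a) * (t - s) := mul_nonneg (mul_nonneg K.coe_nonneg hr) (by linarith)
    nlinarith
  · -- u x s - u x t ≤ ...
    obtain ⟨y, hy, hEq⟩ := exists_min hab hLcont hg.continuous ht x
    set q := (x - y) / t with hqdef
    have hq : q ∈ Icc a b := (mem_interval_iff ht).1 hy
    set w := x - (t - s) * q with hwdef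
    have hyw : y ∈ Icc (w - b * s) (w - a * s) := by
      rw [mem_interval_iff hs]
      have h : (w - y) / s = q := by
        rw [hwdef]
        have hxy : x - y = t * q := by rw [hqdef]; field_simp
        rw [show x - (t - s) * q - y = (x - y) - (t - s) * q by ring, hxy]
        field_simp; ring
      rw [h]; exact hq
    have h1 : u L g a b w s ≤ s * L ((w - y) / s) + g y :=
      u_le hab hLcont hg.continuous hs hyw
    have hwy : (w - y) / s = q := by
      rw [hwdef]
      have hxy : x - y = t * q := by rw [hqdef]; field_simp
      rw [show x - (t - s) * q - y = (x - y) - (t - s) * q by ring, hxy]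
      field_simp; ring
    rw [hwy] at h1
    have h2 : u L g a b x s ≤ u L g a b w s + K * |x - w| :=
      lip_x hab hLcont hg hs w x
    have h3 : |x - w| ≤ (t - s) * max b (-a) := by
      rw [hwdef, show x - (x - (t - s) * q) = (t - s) * q by ring, abs_mul,
        abs_of_nonneg (by linarith : (0:ℝ) ≤ t - s)]
      exact mul_le_mul_of_nonneg_left (abs_le_r hq) (by linarith)
    have h4 : -L q ≤ C0 := by
      have := hC0 q hq
      cases abs_le.1 this with
      | intro hl hr2 => linarith
    have h5 : u L g a b x t = t * L q + g y := hEq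
    have h6 : (K:ℝ) * |x - w| ≤ K * ((t - s) * max b (-a)) :=
      mul_le_mul_of_nonneg_left h3 K.2
    nlinarith

lemma init_bound (ha : a < 0) (hb : 0 < b) (hLcont : ContinuousOn L (Icc a b))
    (hg : LipschitzWith K g) {C0 : ℝ} (hC0 : ∀ p ∈ Icc a b, |L p| ≤ C0)
    {t : ℝ} (ht : 0 < t) (x : ℝ) :
    |u L g a b x t - g x| ≤ (C0 + K * max b (-a)) * t := by
  have hab : a ≤ b := le_of_lt (ha.trans hb)
  have hr : (0:ℝ) ≤ max b (-a) := le_trans hb.le (le_max_left _ _)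
  rw [abs_sub_le_iff]
  constructor
  · -- upper : u ≤ t * L 0 + g x
    have hx : x ∈ Icc (x - b * t) (x - a * t) := by
      rw [mem_interval_iff ht, show (x - x) / t = 0 by simp]
      exact ⟨ha.le, hb.le⟩
    have h1 := u_le hab hLcont hg.continuous ht hx
    rw [show (x - x) / t = 0 by simp] at h1
    have h2 : L 0 ≤ C0 := (abs_le.1 (hC0 0 ⟨ha.le, hb.le⟩)).2
    have h3 : (0:ℝ) ≤ (K:ℝ) * max b (-a) * t := by positivity
    nlinarith
  · -- lower
    have hlow : g x - (C0 + K * max b (-a)) * t ≤ u L g a b x t := by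
      apply le_csInf ((nonempty_Icc.2 (by nlinarith)).image _)
      rintro z ⟨y, hy, rfl⟩
      have hq : (x - y) / t ∈ Icc a b := (mem_interval_iff ht).1 hy
      have h1 : -C0 ≤ L ((x - y) / t) := by
        have := abs_le.1 (hC0 _ hq); linarith [this.1]
      have h2 : |x - y| ≤ t * max b (-a) := by
        have h3 : |(x - y) / t| ≤ max b (-a) := abs_le_r hq
        rw [abs_div, abs_of_pos ht] at h3
        calc |x - y| = t * (|x - y| / t) := by field_simp
          _ ≤ t * max b (-a) := mul_le_mul_of_nonneg_left h3 ht.le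
      have h4 : g x - K * |x - y| ≤ g y := by
        have hd := hg.dist_le_mul x y
        rw [Real.dist_eq, Real.dist_eq] at hd
        linarith [le_abs_self (g x - g y)]
      have h5 : (K:ℝ) * |x - y| ≤ K * (t * max b (-a)) :=
        mul_le_mul_of_nonneg_left h2 K.2
      have h6 : -(t * C0) ≤ t * L ((x - y) / t) := by nlinarith
      nlinarith
    linarith


lemma dirDeriv {x t v1 v2 : ℝ} {D : ℝ × ℝ →L[ℝ] ℝ}
    (hD : HasFDerivAt (fun q : ℝ × ℝ => u L g a b q.1 q.2) D (x, t)) :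
    HasDerivAt (fun h : ℝ => u L g a b (x + h * v1) (t + h * v2)) (D (v1, v2)) 0 := by
  have hc : HasDerivAt (fun h : ℝ => ((x + h * v1, t + h * v2) : ℝ × ℝ))
      ((v1, v2) : ℝ × ℝ) 0 := by
    apply HasDerivAt.prodMk
    · simpa using ((hasDerivAt_id (0:ℝ)).mul_const v1).const_add x
    · simpa using ((hasDerivAt_id (0:ℝ)).mul_const v2).const_add t
  have hD' : HasFDerivAt (fun q : ℝ × ℝ => u L g a b q.1 q.2) D
      ((x + (0:ℝ) * v1, t + (0:ℝ) * v2)) := by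
    have hpt : ((x + (0:ℝ) * v1, t + (0:ℝ) * v2) : ℝ × ℝ) = ((x, t) : ℝ × ℝ) := by norm_num
    rw [hpt]; exact hD
  exact hD'.comp_hasDerivAt 0 hc

lemma pde (ha : a < 0) (hb : 0 < b) (hLconv : ConvexOn ℝ (Icc a b) L)
    (hLcont : ContinuousOn L (Icc a b)) (hg : LipschitzWith K g)
    {x t : ℝ} (ht : 0 < t) {D : ℝ × ℝ →L[ℝ] ℝ}
    (hD : HasFDerivAt (fun q : ℝ × ℝ => u L g a b q.1 q.2) D (x, t)) :
    D (0, 1) + sSup ((fun p => D (1, 0) * p - L p) '' Icc a b) = 0 := by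
  have hab : a ≤ b := le_of_lt (ha.trans hb)
  have hmono : nhdsWithin (0:ℝ) (Ioi 0) ≤ nhdsWithin 0 {(0:ℝ)}ᶜ :=
    nhdsWithin_mono 0 (fun h hh => Set.mem_compl_singleton_iff.2 (ne_of_gt hh))
  have dirA : ∀ q ∈ Icc a b, D (q, 1) ≤ L q := by
    intro q hq
    have hphi : HasDerivAt (fun h : ℝ => u L g a b (x + h * q) (t + h * 1)) (D (q, 1)) 0 :=
      dirDeriv hD
    rw [hasDerivAt_iff_tendsto_slope] at hphi
    apply le_of_tendsto (hphi.mono_left hmono)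
    filter_upwards [self_mem_nhdsWithin] with h hh
    have hhpos : (0:ℝ) < h := hh
    have hslope : ((x + h * q) - x) / ((t + h * 1) - t) = q := by
      rw [show (x + h * q) - x = h * q by ring, show (t + h * 1) - t = h by ring]
      exact mul_div_cancel_left₀ q (ne_of_gt hhpos)
    have hsg := semigroup hab hLconv hLcont hg.continuous ht
      (show t < t + h * 1 by linarith) (by rw [hslope]; exact hq)
    rw [hslope, show (t + h * 1) - t = h by ring] at hsg
    rw [slope_def_field, div_le_iff₀ (show (0:ℝ) < h - 0 by linarith)]
    have hphi0 : u L g a b (x + 0 * q) (t + 0 * 1) = u L g a b x t := by norm_num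
    have hring : L q * (h - 0) = h * L q := by ring
    linarith
  have dirB : ∃ q ∈ Icc a b, L q ≤ D (q, 1) := by
    obtain ⟨y, hy, hEq⟩ := exists_min hab hLcont hg.continuous ht x
    set q := (x - y) / t with hqdef
    have hq : q ∈ Icc a b := (mem_interval_iff ht).1 hy
    refine ⟨q, hq, ?_⟩
    have hphi : HasDerivAt (fun h : ℝ => u L g a b (x + h * (-q)) (t + h * (-1)))
        (D (-q, -1)) 0 := dirDeriv hD
    rw [hasDerivAt_iff_tendsto_slope] at hphi
    have hle : D (-q, -1) ≤ -L q := by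
      apply le_of_tendsto (hphi.mono_left hmono)
      filter_upwards [Ioo_mem_nhdsGT_of_mem (left_mem_Ico.2 ht)] with h hh
      obtain ⟨hh0, hht⟩ := hh
      have hth : (0:ℝ) < t + h * (-1) := by linarith
      have hxy : x - y = t * q := by rw [hqdef]; field_simp
      have hsl : ((x + h * (-q)) - y) / (t + h * (-1)) = q := by
        rw [show (x + h * (-q)) - y = (x - y) - h * q by ring, hxy,
          show t * q - h * q = (t + h * (-1)) * q by ring]
        exact mul_div_cancel_left₀ q (ne_of_gt hth)
      have hmem : y ∈ Icc ((x + h * (-q)) - b * (t + h * (-1)))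
          ((x + h * (-q)) - a * (t + h * (-1))) := by
        rw [mem_interval_iff hth, hsl]; exact hq
      have h1 := u_le hab hLcont hg.continuous hth hmem
      rw [hsl] at h1
      rw [slope_def_field, div_le_iff₀ (show (0:ℝ) < h - 0 by linarith)]
      have hphi0 : u L g a b (x + 0 * (-q)) (t + 0 * (-1)) = u L g a b x t := by norm_num
      have h5 : u L g a b x t = t * L q + g y := hEq
      have hring : (t + h * (-1)) * L q = t * L q - h * L q := by ring
      have hring2 : -L q * (h - 0) = -(h * L q) := by ring
      linarith
    have hneg : D (-q, -1) = -D (q, 1) := by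
      have hpt : ((-q, -1) : ℝ × ℝ) = -((q, 1) : ℝ × ℝ) := by simp [Prod.ext_iff]
      rw [hpt, map_neg]
    rw [hneg] at hle
    linarith
  have hDq : ∀ q : ℝ, D (q, 1) = q * D (1, 0) + D (0, 1) := by
    intro q
    have hsplit : ((q, 1) : ℝ × ℝ) = q • ((1, 0) : ℝ × ℝ) + ((0, 1) : ℝ × ℝ) := by
      simp [Prod.ext_iff]
    rw [hsplit, map_add, D.map_smul, smul_eq_mul]
  have hne : ((fun p => D (1, 0) * p - L p) '' Icc a b).Nonempty :=
    (nonempty_Icc.2 hab).image _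
  have hbdd : BddAbove ((fun p => D (1, 0) * p - L p) '' Icc a b) :=
    (isCompact_Icc.image_of_continuousOn
      ((continuousOn_const.mul continuousOn_id).sub hLcont)).bddAbove
  have hup : sSup ((fun p => D (1, 0) * p - L p) '' Icc a b) ≤ -D (0, 1) := by
    apply csSup_le hne
    rintro z ⟨p, hp, rfl⟩
    have h1 := dirA p hp
    rw [hDq p] at h1
    simp only
    linarith
  have hlo : -D (0, 1) ≤ sSup ((fun p => D (1, 0) * p - L p) '' Icc a b) := by
    obtain ⟨q, hq, hLq⟩ := dirB
    rw [hDq q] at hLq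
    have h2 := le_csSup hbdd (mem_image_of_mem (fun p => D (1, 0) * p - L p) hq)
    linarith
  linarith


lemma lipOn (ha : a < 0) (hb : 0 < b) (hLconv : ConvexOn ℝ (Icc a b) L)
    (hLcont : ContinuousOn L (Icc a b)) (hg : LipschitzWith K g)
    {C0 : ℝ} (hC0 : ∀ p ∈ Icc a b, |L p| ≤ C0) :
    LipschitzOnWith ((K : ℝ) + (C0 + K * max b (-a))).toNNReal
      (fun q : ℝ × ℝ => u L g a b q.1 q.2) {p : ℝ × ℝ | 0 < p.2} := by
  have hab : a ≤ b := le_of_lt (ha.trans hb)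
  have hr : (0:ℝ) ≤ max b (-a) := le_trans hb.le (le_max_left _ _)
  have hC0nn : (0:ℝ) ≤ C0 := le_trans (abs_nonneg _) (hC0 0 ⟨ha.le, hb.le⟩)
  have hCt : (0:ℝ) ≤ C0 + K * max b (-a) :=
    add_nonneg hC0nn (mul_nonneg K.coe_nonneg hr)
  rw [lipschitzOnWith_iff_dist_le_mul]
  rintro ⟨x, t⟩ hp ⟨x', t'⟩ hq
  simp only [Set.mem_setOf_eq] at hp hq
  have h1 : |u L g a b x t - u L g a b x' t| ≤ K * |x - x'| :=
    lip_x_abs hab hLcont hg hp x x'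
  have h2 : |u L g a b x' t - u L g a b x' t'| ≤ (C0 + K * max b (-a)) * |t - t'| := by
    rcases le_total t' t with hle | hle
    · rw [show |t - t'| = t - t' from abs_of_nonneg (by linarith)]
      exact lip_t ha hb hLconv hLcont hg hC0 hq hle x'
    · rw [abs_sub_comm (u L g a b x' t) (u L g a b x' t'),
        show |t - t'| = t' - t by rw [abs_sub_comm]; exact abs_of_nonneg (by linarith)]
      exact lip_t ha hb hLconv hLcont hg hC0 hp hle x'
  have hd1 : |x - x'| ≤ dist ((x, t) : ℝ × ℝ) ((x', t') : ℝ × ℝ) := by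
    rw [Prod.dist_eq]
    exact le_trans (le_of_eq (Real.dist_eq x x').symm) (le_max_left _ _)
  have hd2 : |t - t'| ≤ dist ((x, t) : ℝ × ℝ) ((x', t') : ℝ × ℝ) := by
    rw [Prod.dist_eq]
    exact le_trans (le_of_eq (Real.dist_eq t t').symm) (le_max_right _ _)
  have hdnn : (0:ℝ) ≤ dist ((x, t) : ℝ × ℝ) ((x', t') : ℝ × ℝ) := dist_nonneg
  rw [Real.coe_toNNReal _ (by linarith [K.coe_nonneg] : (0:ℝ) ≤ (K : ℝ) + (C0 + K * max b (-a)))]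
  rw [Real.dist_eq]
  have h3 : |u L g a b x t - u L g a b x' t'| ≤
      |u L g a b x t - u L g a b x' t| + |u L g a b x' t - u L g a b x' t'| :=
    abs_sub_le _ _ _
  have h4 : (K : ℝ) * |x - x'| ≤ K * dist ((x, t) : ℝ × ℝ) ((x', t') : ℝ × ℝ) :=
    mul_le_mul_of_nonneg_left hd1 K.coe_nonneg
  have h5 : (C0 + K * max b (-a)) * |t - t'| ≤
      (C0 + K * max b (-a)) * dist ((x, t) : ℝ × ℝ) ((x', t') : ℝ × ℝ) :=
    mul_le_mul_of_nonneg_left hd2 hCt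
  nlinarith

end HLaux

/-- Theorem 3.7 (Theorem 6): the Hopf–Lax function is an almost-everywhere
solution of `u_t + H(u_x) = 0` on `ℝ × (0,∞)` and attains the initial
condition `g` as `t → 0⁺`. -/
theorem stmt9 (a b : ℝ) (ha : a < 0) (hb : 0 < b) (L : ℝ → ℝ)
    (hLconv : ConvexOn ℝ (Set.Icc a b) L) (hLcont : ContinuousOn L (Set.Icc a b))
    (g : ℝ → ℝ) (hg : ∃ K : NNReal, LipschitzWith K g) :
    let u : ℝ → ℝ → ℝ := fun x t =>
      sInf ((fun y => t * L ((x - y) / t) + g y) '' Set.Icc (x - b * t) (x - a * t))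
    let H : ℝ → ℝ := fun v => sSup ((fun p => v * p - L p) '' Set.Icc a b)
    let U : ℝ × ℝ → ℝ := fun q => u q.1 q.2
    (∀ᵐ p : ℝ × ℝ ∂volume, 0 < p.2 →
      DifferentiableAt ℝ U p ∧
      fderiv ℝ U p (0, 1) + H (fderiv ℝ U p (1, 0)) = 0) ∧
    (∀ x : ℝ, Filter.Tendsto (fun t => u x t) (nhdsWithin 0 (Set.Ioi 0)) (nhds (g x))) := by
  obtain ⟨K, hgK⟩ := hg
  intro u H U
  have hab : a ≤ b := le_of_lt (ha.trans hb)
  obtain ⟨C0, hC0'⟩ := isCompact_Icc.exists_bound_of_continuousOn hLcont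
  have hC0 : ∀ p ∈ Set.Icc a b, |L p| ≤ C0 := fun p hp => by
    have := hC0' p hp; rwa [Real.norm_eq_abs] at this
  have hlip := HLaux.lipOn ha hb hLconv hLcont hgK hC0
  obtain ⟨E, hE, hEOn⟩ := hlip.extend_real
  constructor
  · filter_upwards [hE.ae_differentiableAt (μ := volume)] with p hdiff hp2
    have hopen : IsOpen {q : ℝ × ℝ | 0 < q.2} := isOpen_lt continuous_const continuous_snd
    have hmem : {q : ℝ × ℝ | 0 < q.2} ∈ nhds p := hopen.mem_nhds hp2
    have hUE : U =ᶠ[nhds p] E := Filter.eventuallyEq_of_mem hmem (fun q hq => hEOn hq)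
    have hdU : DifferentiableAt ℝ U p := hUE.differentiableAt_iff.2 hdiff
    refine ⟨hdU, ?_⟩
    have hfd : HasFDerivAt (fun q : ℝ × ℝ => HLaux.u L g a b q.1 q.2)
        (fderiv ℝ U p) (p.1, p.2) := by
      rw [show ((p.1, p.2) : ℝ × ℝ) = p from rfl]
      exact hdU.hasFDerivAt
    exact HLaux.pde ha hb hLconv hLcont hgK hp2 hfd
  · intro x
    rw [tendsto_iff_dist_tendsto_zero]
    have hB : Filter.Tendsto (fun t : ℝ => (C0 + (K : ℝ) * max b (-a)) * t)
        (nhdsWithin 0 (Set.Ioi 0)) (nhds 0) := by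
      have hcont : Continuous (fun t : ℝ => (C0 + (K : ℝ) * max b (-a)) * t) :=
        continuous_const.mul continuous_id
      have h := hcont.tendsto (0 : ℝ)
      have h2 := h.mono_left (nhdsWithin_le_nhds (s := Set.Ioi (0:ℝ)))
      simpa using h2
    apply squeeze_zero' _ _ hB
    · exact Filter.Eventually.of_forall fun t => dist_nonneg
    · filter_upwards [self_mem_nhdsWithin] with t ht
      rw [Real.dist_eq]
      exact HLaux.init_bound ha hb hLcont hgK hC0 ht x
end

section
/- Fix real numbers a ≤ b, let L : ℝ → ℝ be convex on the closed interval [a,b], let g : ℝ → ℝ be any function, and let t > 0. Let x₁ < x₂ and y < y₁* be real numbers such that (x₁ − y₁*)/t ∈ [a,b] and (x₂ − y)/t ∈ [a,b]. If t·L((x₁ − y₁*)/t) + g(y₁*) ≤ t·L((x₁ − y)/t) + g(y), then t·L((x₂ − y₁*)/t) + g(y₁*) ≤ t·L((x₂ − y)/t) + g(y). -/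
/-- Lemma 4.1: comparison inequality from convexity of `L` on `[a,b]`: if `y₁*`
beats a smaller point `y` in the Hopf–Lax minimization at `x₁`, it also beats
`y` at any `x₂ > x₁`. -/
theorem stmt12 (a b : ℝ) (hab : a ≤ b) (L : ℝ → ℝ)
    (hL : ConvexOn ℝ (Set.Icc a b) L) (g : ℝ → ℝ) (t : ℝ) (ht : 0 < t)
    (x₁ x₂ y y₁ : ℝ) (hx : x₁ < x₂) (hy : y < y₁)
    (h1 : (x₁ - y₁) / t ∈ Set.Icc a b) (h2 : (x₂ - y) / t ∈ Set.Icc a b)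
    (hmin : t * L ((x₁ - y₁) / t) + g y₁ ≤ t * L ((x₁ - y) / t) + g y) :
    t * L ((x₂ - y₁) / t) + g y₁ ≤ t * L ((x₂ - y) / t) + g y := by
  set p := (x₁ - y₁) / t with hp
  set q := (x₂ - y) / t with hq
  set u := (x₂ - y₁) / t with hu
  set v := (x₁ - y) / t with hv
  have hup : 0 < u - p := by
    rw [hu, hp, div_sub_div_same]
    apply div_pos (by linarith) ht
  have hqu : 0 < q - u := by
    rw [hq, hu, div_sub_div_same]
    apply div_pos (by linarith) ht
  have hs : 0 < q - p := by linarith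
  have hθ₁ : 0 ≤ (q - u) / (q - p) := by positivity
  have hθ₂ : 0 ≤ (u - p) / (q - p) := by positivity
  have hsum : (q - u) / (q - p) + (u - p) / (q - p) = 1 := by
    field_simp
    ring
  have hLu := hL.2 h1 h2 hθ₁ hθ₂ hsum
  have hLv := hL.2 h1 h2 hθ₂ hθ₁ (by linarith : (u - p) / (q - p) + (q - u) / (q - p) = 1)
  simp only [smul_eq_mul] at hLu hLv
  have hueq : (q - u) / (q - p) * p + (u - p) / (q - p) * q = u := by
    field_simp; ring
  have hpq : u + v = p + q := by rw [hu, hv, hp, hq]; field_simp; ring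
  have hveq : (u - p) / (q - p) * p + (q - u) / (q - p) * q = v := by
    field_simp
    nlinarith [hpq]
  rw [hueq] at hLu
  rw [hveq] at hLv
  have hc : (q - u) / (q - p) * L p + (u - p) / (q - p) * L q
      + ((u - p) / (q - p) * L p + (q - u) / (q - p) * L q) = L p + L q := by
    field_simp; ring
  have key : L u + L v ≤ L p + L q := by linarith
  nlinarith [key, hmin, ht.le]
end

section
/- Fix real numbers a < 0 < b, let L : ℝ → ℝ be convex and continuous on the closed interval [a,b], and let g : ℝ → ℝ be continuous. For x ∈ ℝ and t > 0 let y*(x,t) denote the greatest minimizer of y ↦ t·L((x−y)/t) + g(y) over the compact interval [x − b·t, x − a·t] (it exists: the set of minimizers is nonempty and contains its supremum). Then: (i) for each fixed t > 0, the map x ↦ y*(x,t) is nondecreasing on ℝ; and (ii) consequently, for each fixed t > 0, the map x ↦ y*(x,t) is differentiable at Lebesgue-almost every x ∈ ℝ. -/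
open MeasureTheory

lemma conv_aux13 {a b : ℝ} {L : ℝ → ℝ} (hL : ConvexOn ℝ (Set.Icc a b) L)
    {p q d : ℝ} (hpq : p ≤ q) (hd : 0 ≤ d) (hp : p ∈ Set.Icc a b)
    (hq : q ∈ Set.Icc a b) (hpd : p + d ∈ Set.Icc a b) (hqd : q + d ∈ Set.Icc a b) :
    L (p + d) + L q ≤ L p + L (q + d) := by
  rcases eq_or_lt_of_le (by linarith : p ≤ q + d) with h | h
  · have hd0 : d = 0 := by linarith
    have hpq' : p = q := by linarith
    subst hd0 hpq'
    simp
  · set s := q + d - p with hs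
    have hs0 : 0 < s := by simp only [hs]; linarith
    have hw1 : (0:ℝ) ≤ d / s := div_nonneg hd hs0.le
    have hw1' : (0:ℝ) ≤ 1 - d / s := by
      have : d / s ≤ 1 := (div_le_one hs0).2 (by simp only [hs]; linarith)
      linarith
    have hw2 : (0:ℝ) ≤ (q - p) / s := div_nonneg (by linarith) hs0.le
    have hw2' : (0:ℝ) ≤ 1 - (q - p) / s := by
      have : (q - p) / s ≤ 1 := (div_le_one hs0).2 (by simp only [hs]; linarith)
      linarith
    have key1 : (1 - d / s) * p + (d / s) * (q + d) = p + d := by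
      field_simp
      ring
    have key2 : (1 - (q - p) / s) * p + ((q - p) / s) * (q + d) = q := by
      field_simp
      ring
    have h1 := hL.2 hp hqd hw1' hw1 (by ring)
    have h2 := hL.2 hp hqd hw2' hw2 (by ring)
    rw [smul_eq_mul, smul_eq_mul, smul_eq_mul, smul_eq_mul, key1] at h1
    rw [smul_eq_mul, smul_eq_mul, smul_eq_mul, smul_eq_mul, key2] at h2
    have hsum : d / s + (q - p) / s = 1 := by
      field_simp
      simp only [hs]; ring
    have h4 : (1 - d/s)*L p + d/s*L (q+d) + ((1 - (q-p)/s)*L p + (q-p)/s*L (q+d))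
        = L p + L (q+d) := by
      linear_combination (L (q+d) - L p) * hsum
    linarith

/-- Theorem 4.2: the greatest minimizer `y*(x,t)` of the Hopf–Lax functional is
nondecreasing in `x` for each fixed `t > 0`, and hence differentiable at
almost every `x`. -/
theorem stmt13 (a b : ℝ) (ha : a < 0) (hb : 0 < b) (L : ℝ → ℝ)
    (hLconv : ConvexOn ℝ (Set.Icc a b) L) (hLcont : ContinuousOn L (Set.Icc a b))
    (g : ℝ → ℝ) (hg : Continuous g) (ystar : ℝ → ℝ → ℝ)
    (hmem : ∀ x : ℝ, ∀ t > (0 : ℝ),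
      ystar x t ∈ Set.Icc (x - b * t) (x - a * t))
    (hmin : ∀ x : ℝ, ∀ t > (0 : ℝ), ∀ z ∈ Set.Icc (x - b * t) (x - a * t),
      t * L ((x - ystar x t) / t) + g (ystar x t) ≤ t * L ((x - z) / t) + g z)
    (hgreatest : ∀ x : ℝ, ∀ t > (0 : ℝ), ∀ y ∈ Set.Icc (x - b * t) (x - a * t),
      (∀ z ∈ Set.Icc (x - b * t) (x - a * t),
        t * L ((x - y) / t) + g y ≤ t * L ((x - z) / t) + g z) → y ≤ ystar x t) :
    (∀ t > (0 : ℝ), Monotone fun x => ystar x t) ∧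
    (∀ t > (0 : ℝ), ∀ᵐ x : ℝ ∂volume, DifferentiableAt ℝ (fun x' => ystar x' t) x) := by
  have hmono : ∀ t > (0 : ℝ), Monotone fun x => ystar x t := by
    intro t ht
    intro x1 x2 h12
    simp only
    by_contra hcon
    push_neg at hcon
    set y1 := ystar x1 t with hy1
    set y2 := ystar x2 t with hy2
    -- hcon : y2 < y1
    have hm1 := hmem x1 t ht
    have hm2 := hmem x2 t ht
    rw [Set.mem_Icc] at hm1 hm2
    set p : ℝ := (x1 - y1) / t with hp
    set q : ℝ := (x1 - y2) / t with hq
    set d : ℝ := (x2 - x1) / t with hd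
    have hd0 : 0 ≤ d := div_nonneg (by linarith) ht.le
    have hpq : p ≤ q := by
      rw [hp, hq]
      gcongr <;> linarith
    have hpd : p + d = (x2 - y1) / t := by
      rw [hp, hd]; field_simp; ring
    have hqd : q + d = (x2 - y2) / t := by
      rw [hq, hd]; field_simp; ring
    -- memberships in [a,b]
    have hpmem : p ∈ Set.Icc a b := by
      rw [hp, Set.mem_Icc]
      constructor
      · rw [le_div_iff₀ ht]; linarith
      · rw [div_le_iff₀ ht]; linarith
    have hqdmem : q + d ∈ Set.Icc a b := by
      rw [hqd, Set.mem_Icc]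
      constructor
      · rw [le_div_iff₀ ht]; linarith
      · rw [div_le_iff₀ ht]; linarith
    have hqmem : q ∈ Set.Icc a b := by
      rw [Set.mem_Icc]
      rw [Set.mem_Icc] at hpmem hqdmem
      constructor
      · linarith [hpmem.1]
      · linarith [hqdmem.2]
    have hpdmem : p + d ∈ Set.Icc a b := by
      rw [Set.mem_Icc]
      rw [Set.mem_Icc] at hpmem hqdmem
      constructor
      · linarith [hpmem.1]
      · linarith [hqdmem.2]
    -- convexity cross inequality
    have hconv := conv_aux13 hLconv hpq hd0 hpmem hqmem hpdmem hqdmem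
    -- y2 is admissible for the x1 problem
    have hy2mem1 : y2 ∈ Set.Icc (x1 - b * t) (x1 - a * t) := by
      rw [Set.mem_Icc]; constructor <;> linarith [hm2.1, hm1.2]
    have hmin1 := hmin x1 t ht y2 hy2mem1
    rw [← hp, ← hq] at hmin1
    -- y1 is admissible for the x2 problem
    have hy1mem2 : y1 ∈ Set.Icc (x2 - b * t) (x2 - a * t) := by
      rw [Set.mem_Icc]; constructor <;> linarith [hm2.1, hm1.2]
    -- y1 is a minimizer for the x2 problem
    have hkey : ∀ z ∈ Set.Icc (x2 - b * t) (x2 - a * t),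
        t * L ((x2 - y1) / t) + g y1 ≤ t * L ((x2 - z) / t) + g z := by
      intro z hz
      have hminz := hmin x2 t ht z hz
      rw [← hqd] at hminz
      rw [← hpd]
      have hconv' : t * L (p + d) + t * L q ≤ t * L p + t * L (q + d) := by
        have := mul_le_mul_of_nonneg_left hconv ht.le
        nlinarith
      linarith
    have := hgreatest x2 t ht y1 hy1mem2 hkey
    linarith
  refine ⟨hmono, ?_⟩
  intro t ht
  exact (hmono t ht).ae_differentiableAt
end

section
/- Fix real numbers a < 0 < b, let L : ℝ → ℝ be convex and continuous on the closed interval [a,b], let g : ℝ → ℝ be differentiable, and fix t > 0 and x₀ ∈ ℝ. Suppose there is an open neighborhood U of x₀ and a function ŷ : U → ℝ such that for each x ∈ U, ŷ(x) is the unique minimizer of y ↦ t·L((x−y)/t) + g(y) over [x − b·t, x − a·t]. Suppose further that ŷ is differentiable at x₀, that ŷ(x₀) lies in the open interval (x₀ − b·t, x₀ − a·t), and that L is differentiable at q₀ := (x₀ − ŷ(x₀))/t. Then L'(q₀) = g'(ŷ(x₀)), and the function x ↦ u(x,t) := min_{y ∈ [x − b·t, x − a·t]} ( t·L((x−y)/t)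 + g(y) ) is differentiable at x₀ with ∂_x u(x₀,t) = g'(ŷ(x₀)). -/
/-- Lemma 4.2: when the Hopf–Lax minimizer `ŷ(x,t)` is unique (locally in `x`),
lies in the interior of the admissible interval, and `L` is differentiable at
`(x₀ - ŷ(x₀))/t`, the first-order condition `L'((x₀-ŷ)/t) = g'(ŷ)` holds and
`∂ₓ u(x₀,t) = g'(ŷ(x₀))`. -/
theorem stmt14 (a b : ℝ) (ha : a < 0) (hb : 0 < b) (L : ℝ → ℝ)
    (hLconv : ConvexOn ℝ (Set.Icc a b) L) (hLcont : ContinuousOn L (Set.Icc a b))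
    (g : ℝ → ℝ) (hg : Differentiable ℝ g) (t : ℝ) (ht : 0 < t) (x₀ : ℝ)
    (U : Set ℝ) (hU : U ∈ nhds x₀) (yhat : ℝ → ℝ)
    (hmem : ∀ x ∈ U, yhat x ∈ Set.Icc (x - b * t) (x - a * t))
    (hmin : ∀ x ∈ U, ∀ y ∈ Set.Icc (x - b * t) (x - a * t),
      t * L ((x - yhat x) / t) + g (yhat x) ≤ t * L ((x - y) / t) + g y)
    (huniq : ∀ x ∈ U, ∀ y ∈ Set.Icc (x - b * t) (x - a * t),
      (∀ z ∈ Set.Icc (x - b * t) (x - a * t),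
        t * L ((x - y) / t) + g y ≤ t * L ((x - z) / t) + g z) → y = yhat x)
    (hydiff : DifferentiableAt ℝ yhat x₀)
    (hinterior : yhat x₀ ∈ Set.Ioo (x₀ - b * t) (x₀ - a * t))
    (hLdiff : DifferentiableAt ℝ L ((x₀ - yhat x₀) / t)) :
    deriv L ((x₀ - yhat x₀) / t) = deriv g (yhat x₀) ∧
    HasDerivAt
      (fun x => sInf ((fun y => t * L ((x - y) / t) + g y) ''
        Set.Icc (x - b * t) (x - a * t)))
      (deriv g (yhat x₀)) x₀ := by
  have hx₀U : x₀ ∈ U := mem_of_mem_nhds hU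
  have ht' : t ≠ 0 := ne_of_gt ht
  set y₀ := yhat x₀ with hy₀
  set q₀ := (x₀ - yhat x₀) / t with hq₀
  -- first-order condition
  have hloc : IsLocalMin (fun y => t * L ((x₀ - y) / t) + g y) y₀ := by
    have hO : Set.Ioo (x₀ - b * t) (x₀ - a * t) ∈ nhds y₀ :=
      Ioo_mem_nhds hinterior.1 hinterior.2
    filter_upwards [hO] with y hy
    exact hmin x₀ hx₀U y (Set.Ioo_subset_Icc_self hy)
  have h1 : HasDerivAt (fun y : ℝ => (x₀ - y) / t) (-1 / t) y₀ := by
    simpa using ((hasDerivAt_id y₀).const_sub x₀).div_const t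
  have hφ : HasDerivAt (fun y => t * L ((x₀ - y) / t) + g y)
      (t * (deriv L q₀ * (-1 / t)) + deriv g y₀) y₀ :=
    ((hLdiff.hasDerivAt.comp y₀ h1).const_mul t).add (hg y₀).hasDerivAt
  have hzero := hloc.hasDerivAt_eq_zero hφ
  have hfoc : deriv L q₀ = deriv g y₀ := by
    field_simp at hzero
    have h : t * deriv L q₀ = t * deriv g y₀ := by linear_combination (-t) * hzero
    exact mul_left_cancel₀ ht' h
  refine ⟨hfoc, ?_⟩
  have hev : (fun x => sInf ((fun y => t * L ((x - y) / t) + g y) ''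
        Set.Icc (x - b * t) (x - a * t)))
      =ᶠ[nhds x₀] fun x => t * L ((x - yhat x) / t) + g (yhat x) := by
    filter_upwards [hU] with x hx
    apply IsLeast.csInf_eq
    constructor
    · exact ⟨yhat x, hmem x hx, rfl⟩
    · rintro _ ⟨y, hy, rfl⟩
      exact hmin x hx y hy
  have hinner : HasDerivAt (fun x => (x - yhat x) / t)
      ((1 - deriv yhat x₀) / t) x₀ := by
    simpa using ((hasDerivAt_id x₀).sub hydiff.hasDerivAt).div_const t
  have hh : HasDerivAt (fun x => t * L ((x - yhat x) / t) + g (yhat x))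
      (t * (deriv L q₀ * ((1 - deriv yhat x₀) / t)) + deriv g y₀ * deriv yhat x₀) x₀ :=
    ((hLdiff.hasDerivAt.comp x₀ hinner).const_mul t).add
      ((hg y₀).hasDerivAt.comp x₀ hydiff.hasDerivAt)
  have hval : t * (deriv L q₀ * ((1 - deriv yhat x₀) / t)) + deriv g y₀ * deriv yhat x₀
      = deriv g y₀ := by
    rw [hfoc]; field_simp; ring
  exact (hval ▸ hh).congr_of_eventuallyEq hev
end

section
/- Fix real numbers a < 0 < b, let L : ℝ → ℝ be convex and continuous on the closed interval [a,b] and piecewise linear there (there is a partition a = p₀ < p₁ < ⋯ < p_M = b such that L is affine on each subinterval [p_{j−1}, p_j]), and let g : ℝ → ℝ be continuously differentiable. For x ∈ ℝ and t > 0 define u(x,t) := min_{y ∈ [x − b·t, x − a·t]} ( t·L((x−y)/t) + g(y) ), and let y*(x,t) denote the greatest minimizer of y ↦ t·L((x−y)/t) + g(y) over [x − b·t, x − a·t]. Then for each fixed t > 0, for Lebesgue-almost every x ∈ ℝ, the function x' ↦ u(x',t) is differentiable at x and ∂_x u(x,t) = g'( y*(x,t) ). -/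
open MeasureTheory

/-- Four-point (submodularity) inequality for a convex function. -/
lemma four_point_aux {a b : ℝ} {L : ℝ → ℝ} (hL : ConvexOn ℝ (Set.Icc a b) L)
    {w x y z : ℝ} (hw : w ∈ Set.Icc a b) (hz : z ∈ Set.Icc a b)
    (hwx : w ≤ x) (hxz : x ≤ z) (hsum : x + y = w + z) :
    L x + L y ≤ L w + L z := by
  rcases eq_or_lt_of_le (hwx.trans hxz) with h | h
  · have hx : x = w := le_antisymm (h ▸ hxz) hwx
    have hy : y = z := by linarith
    simp [hx, hy]
  · set μ := (z - x) / (z - w) with hμ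
    have hzw : 0 < z - w := by linarith
    have hμ0 : 0 ≤ μ := div_nonneg (by linarith) hzw.le
    have hμ1 : μ ≤ 1 := by rw [div_le_one hzw]; linarith
    have h1 : μ • w + (1 - μ) • z = x := by
      simp only [smul_eq_mul, hμ]
      field_simp
      ring
    have h2 : (1 - μ) • w + μ • z = y := by
      simp only [smul_eq_mul, hμ]
      field_simp
      nlinarith [hsum]
    have e1 := hL.2 hw hz hμ0 (by linarith : (0:ℝ) ≤ 1 - μ) (by ring)
    have e2 := hL.2 hw hz (by linarith : (0:ℝ) ≤ 1 - μ) hμ0 (by ring)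
    rw [h1] at e1
    rw [h2] at e2
    simp only [smul_eq_mul] at e1 e2
    linarith

/-- Theorem 4.3 (main identity): for the conservation law with polygonal flux
(piecewise linear convex `L` on `[a,b]`) and `g ∈ C¹`, for each fixed `t > 0`
and a.e. `x`, the Hopf–Lax value function is differentiable in `x` and
`∂ₓ u(x,t) = g'(y*(x,t))`, where `y*` is the greatest minimizer. -/
theorem stmt15 (a b : ℝ) (ha : a < 0) (hb : 0 < b) (L : ℝ → ℝ)
    (hLconv : ConvexOn ℝ (Set.Icc a b) L) (hLcont : ContinuousOn L (Set.Icc a b))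
    (M : ℕ) (p : Fin (M + 1) → ℝ) (hp : StrictMono p)
    (hp0 : p 0 = a) (hpM : p (Fin.last M) = b)
    (hpiecewise : ∀ j : Fin M, ∃ c d : ℝ,
      ∀ q ∈ Set.Icc (p j.castSucc) (p j.succ), L q = c * q + d)
    (g : ℝ → ℝ) (hg : ContDiff ℝ 1 g) (ystar : ℝ → ℝ → ℝ)
    (hmem : ∀ x : ℝ, ∀ t > (0 : ℝ),
      ystar x t ∈ Set.Icc (x - b * t) (x - a * t))
    (hmin : ∀ x : ℝ, ∀ t > (0 : ℝ), ∀ z ∈ Set.Icc (x - b * t) (x - a * t),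
      t * L ((x - ystar x t) / t) + g (ystar x t) ≤ t * L ((x - z) / t) + g z)
    (hgreatest : ∀ x : ℝ, ∀ t > (0 : ℝ), ∀ y ∈ Set.Icc (x - b * t) (x - a * t),
      (∀ z ∈ Set.Icc (x - b * t) (x - a * t),
        t * L ((x - y) / t) + g y ≤ t * L ((x - z) / t) + g z) → y ≤ ystar x t) :
    let u : ℝ → ℝ → ℝ := fun x t =>
      sInf ((fun y => t * L ((x - y) / t) + g y) '' Set.Icc (x - b * t) (x - a * t))
    ∀ t > (0 : ℝ), ∀ᵐ x : ℝ ∂volume,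
      DifferentiableAt ℝ (fun x' => u x' t) x ∧
      deriv (fun x' => u x' t) x = deriv g (ystar x t) := by
  intro u t ht
  set φ : ℝ → ℝ := fun x => ystar x t with hφdef
  have hgd : Differentiable ℝ g := hg.differentiable one_ne_zero
  have hg' : Continuous (deriv g) := hg.continuous_deriv le_rfl
  -- the value function equals the value at the greatest minimizer
  have hu : ∀ x : ℝ, u x t = t * L ((x - φ x) / t) + g (φ x) := by
    intro x
    apply IsLeast.csInf_eq
    constructor
    · exact ⟨φ x, hmem x t ht, rfl⟩
    · rintro _ ⟨z, hz, rfl⟩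
      exact hmin x t ht z hz
  have hfeas : ∀ x : ℝ, x - b * t ≤ φ x ∧ φ x ≤ x - a * t :=
    fun x => ⟨(hmem x t ht).1, (hmem x t ht).2⟩
  have hslope : ∀ x y : ℝ, x - b * t ≤ y → y ≤ x - a * t → (x - y) / t ∈ Set.Icc a b := by
    intro x y h1 h2
    constructor
    · rw [le_div_iff₀ ht]; linarith
    · rw [div_le_iff₀ ht]; linarith
  -- key inequality 1
  have key1 : ∀ x x' : ℝ, u x' t ≤ u x t + (g (φ x + (x' - x)) - g (φ x)) := by
    intro x x'
    have hz : φ x + (x' - x) ∈ Set.Icc (x' - b * t) (x' - a * t) :=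
      ⟨by linarith [(hfeas x).1], by linarith [(hfeas x).2]⟩
    have hm := hmin x' t ht (φ x + (x' - x)) hz
    have harg : (x' - (φ x + (x' - x))) / t = (x - φ x) / t := by ring_nf
    rw [harg] at hm
    rw [hu x', hu x]
    linarith
  -- key inequality 2
  have key2 : ∀ x x' : ℝ, u x t ≤ u x' t + (g (φ x' - (x' - x)) - g (φ x')) := by
    intro x x'
    have hz : φ x' - (x' - x) ∈ Set.Icc (x - b * t) (x - a * t) :=
      ⟨by linarith [(hfeas x').1], by linarith [(hfeas x').2]⟩
    have hm := hmin x t ht (φ x' - (x' - x)) hz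
    have harg : (x - (φ x' - (x' - x))) / t = (x' - φ x') / t := by ring_nf
    rw [harg] at hm
    rw [hu x, hu x']
    linarith
  -- monotonicity of the greatest minimizer
  have hmono : Monotone φ := by
    intro x₁ x₂ hx
    rcases eq_or_lt_of_le hx with rfl | hx
    · exact le_rfl
    by_contra hcon
    push_neg at hcon
    have h1 := hfeas x₁
    have h2 := hfeas x₂
    have hf1 : φ x₂ ∈ Set.Icc (x₁ - b * t) (x₁ - a * t) :=
      ⟨by linarith, by linarith⟩
    have hf2 : φ x₁ ∈ Set.Icc (x₂ - b * t) (x₂ - a * t) :=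
      ⟨by linarith, by linarith⟩
    have hw := hslope x₁ (φ x₁) h1.1 h1.2
    have hz := hslope x₂ (φ x₂) h2.1 h2.2
    have h4 : L ((x₂ - φ x₁) / t) + L ((x₁ - φ x₂) / t)
        ≤ L ((x₁ - φ x₁) / t) + L ((x₂ - φ x₂) / t) :=
      four_point_aux hLconv hw hz
        ((div_le_div_iff_of_pos_right ht).mpr (by linarith))
        ((div_le_div_iff_of_pos_right ht).mpr (by linarith))
        (by ring)
    have hA := hmin x₁ t ht (φ x₂) hf1
    have h4' := mul_le_mul_of_nonneg_left h4 ht.le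
    rw [mul_add, mul_add] at h4'
    have hB : t * L ((x₂ - φ x₁) / t) + g (φ x₁) ≤ t * L ((x₂ - φ x₂) / t) + g (φ x₂) := by
      linarith
    have := hgreatest x₂ t ht (φ x₁) hf2
      (fun z hz' => hB.trans (hmin x₂ t ht z hz'))
    exact absurd this (not_le.mpr hcon)
  -- a.e. continuity of φ
  have hae : ∀ᵐ x : ℝ ∂volume, ContinuousAt φ x := by
    rw [ae_iff]
    exact hmono.countable_not_continuousAt.measure_zero _
  filter_upwards [hae] with x hx
  set d := deriv g (φ x) with hd
  have hder : HasDerivAt (fun x' => u x' t) d x := by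
    rw [hasDerivAt_iff_isLittleO, Asymptotics.isLittleO_iff]
    intro c hc
    obtain ⟨δ, hδ0, hδ⟩ := Metric.continuousAt_iff.mp (hg'.continuousAt (x := φ x)) c hc
    obtain ⟨η, hη0, hη⟩ := Metric.continuousAt_iff.mp hx (δ / 2) (by positivity)
    have hmin' : (0 : ℝ) < min η (δ / 2) := lt_min hη0 (by positivity)
    filter_upwards [Metric.ball_mem_nhds x hmin'] with x' hx'
    rw [Metric.mem_ball, Real.dist_eq] at hx'
    set h := x' - x with hh
    have hh1 : |h| < η := lt_of_lt_of_le hx' (min_le_left _ _)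
    have hh2 : |h| < δ / 2 := lt_of_lt_of_le hx' (min_le_right _ _)
    have hφc : |φ x' - φ x| < δ / 2 := by
      have := hη (show dist x' x < η by rwa [Real.dist_eq])
      rwa [Real.dist_eq] at this
    -- Lipschitz bound for G s = g s - d * s on the ball of radius δ
    set G : ℝ → ℝ := fun s => g s - d * s with hG
    have hGd : ∀ s : ℝ, HasDerivAt G (deriv g s - d) s := by
      intro s
      have h1 : HasDerivAt g (deriv g s) s := (hgd s).hasDerivAt
      have h2 : HasDerivAt (fun y : ℝ => d * y) d s := by
        simpa using (hasDerivAt_id s).const_mul d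
      exact h1.sub h2
    have hlip : ∀ p' q', p' ∈ Metric.ball (φ x) δ → q' ∈ Metric.ball (φ x) δ →
        |G p' - G q'| ≤ c * |p' - q'| := by
      intro p' q' hp' hq'
      have := (convex_ball (φ x) δ).norm_image_sub_le_of_norm_hasDerivWithin_le
        (f := G) (f' := fun s => deriv g s - d) (C := c)
        (fun s _ => (hGd s).hasDerivWithinAt)
        (fun s hs => by
          have := hδ (show dist s (φ x) < δ from Metric.mem_ball.mp hs)
          rw [Real.dist_eq] at this
          simpa [Real.norm_eq_abs] using this.le)
        hq' hp'
      simpa [Real.norm_eq_abs] using this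
    -- memberships
    have m1 : φ x + h ∈ Metric.ball (φ x) δ := by
      rw [Metric.mem_ball, Real.dist_eq]
      have : φ x + h - φ x = h := by ring
      rw [this]; linarith
    have m2 : φ x ∈ Metric.ball (φ x) δ := by
      rw [Metric.mem_ball, dist_self]; linarith
    have m3 : φ x' ∈ Metric.ball (φ x) δ := by
      rw [Metric.mem_ball, Real.dist_eq]; linarith
    have m4 : φ x' - h ∈ Metric.ball (φ x) δ := by
      rw [Metric.mem_ball, Real.dist_eq]
      calc |φ x' - h - φ x| ≤ |φ x' - φ x| + |h| := by
            have : φ x' - h - φ x = (φ x' - φ x) + (-h) := by ring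
            rw [this]
            simpa using abs_add_le (φ x' - φ x) (-h)
        _ < δ := by linarith
    -- combine
    have u1 := hlip (φ x + h) (φ x) m1 m2
    have u2 := hlip (φ x') (φ x' - h) m3 m4
    have e1 : φ x + h - φ x = h := by ring
    have e2 : φ x' - (φ x' - h) = h := by ring
    rw [e1] at u1
    rw [e2] at u2
    have u1' : |(g (φ x + h) - d * (φ x + h)) - (g (φ x) - d * φ x)| ≤ c * |h| := u1
    have u2' : |(g (φ x') - d * (φ x')) - (g (φ x' - h) - d * (φ x' - h))| ≤ c * |h| := u2
    have u1'' := abs_le.mp u1'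
    have u2'' := abs_le.mp u2'
    have kU := key1 x x'
    have kL := key2 x x'
    simp only [smul_eq_mul, Real.norm_eq_abs]
    rw [abs_le]
    constructor
    · nlinarith [u2''.1, u2''.2, kL]
    · nlinarith [u1''.1, u1''.2, kU]
  exact ⟨hder.differentiableAt, hder.deriv⟩
end

section
/- Fix real numbers a < 0 < b, let L : ℝ → ℝ be convex and continuous on the closed interval [a,b], let g : ℝ → ℝ be differentiable, and fix t > 0. Let y*(·,t) : ℝ → ℝ be the greatest-minimizer function, where y*(x,t) is the supremum of the set of minimizers of y ↦ t·L((x−y)/t) + g(y) over [x − b·t, x − a·t] (this supremum is itself a minimizer, and x ↦ y*(x,t) is nondecreasing). If the derivative g' : ℝ → ℝ has bounded variation on ℝ, then the function x ↦ g'( y*(x,t) ) has bounded variation on ℝ. -/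
/-- Theorem 4.4: if the initial datum `g'` has bounded variation on `ℝ`, then
so does the solution `w(·,t) = g'(y*(·,t))`, where `y*(·,t)` is the greatest
minimizer of the Hopf–Lax functional for fixed `t > 0`. -/
theorem stmt16 (a b : ℝ) (ha : a < 0) (hb : 0 < b) (L : ℝ → ℝ)
    (hLconv : ConvexOn ℝ (Set.Icc a b) L) (hLcont : ContinuousOn L (Set.Icc a b))
    (g : ℝ → ℝ) (hg : Differentiable ℝ g) (t : ℝ) (ht : 0 < t)
    (ystar : ℝ → ℝ)
    (hmem : ∀ x : ℝ, ystar x ∈ Set.Icc (x - b * t) (x - a * t))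
    (hmin : ∀ x : ℝ, ∀ z ∈ Set.Icc (x - b * t) (x - a * t),
      t * L ((x - ystar x) / t) + g (ystar x) ≤ t * L ((x - z) / t) + g z)
    (hgreatest : ∀ x : ℝ, ∀ y ∈ Set.Icc (x - b * t) (x - a * t),
      (∀ z ∈ Set.Icc (x - b * t) (x - a * t),
        t * L ((x - y) / t) + g y ≤ t * L ((x - z) / t) + g z) → y ≤ ystar x)
    (hBV : BoundedVariationOn (deriv g) Set.univ) :
    BoundedVariationOn (fun x => deriv g (ystar x)) Set.univ := by
  -- First: ystar is monotone.
  have hmono : Monotone ystar := by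
    intro x1 x2 hx
    rcases eq_or_lt_of_le hx with rfl | hx
    · exact le_rfl
    by_contra hlt
    push_neg at hlt
    set y1 := ystar x1 with hy1
    set y2 := ystar x2 with hy2
    -- y2 < y1
    have h1 := hmem x1
    have h2 := hmem x2
    -- y2 lies in x1's interval
    have hy2mem : y2 ∈ Set.Icc (x1 - b * t) (x1 - a * t) := by
      constructor
      · have : x1 - b * t ≤ x2 - b * t := by linarith
        exact this.trans h2.1
      · have : y2 ≤ y1 := hlt.le
        exact this.trans h1.2
    -- y1 lies in x2's interval
    have hy1mem : y1 ∈ Set.Icc (x2 - b * t) (x2 - a * t) := by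
      constructor
      · exact h2.1.trans hlt.le
      · have : x1 - a * t ≤ x2 - a * t := by linarith
        exact h1.2.trans this
    -- exchange: show y1 is a minimizer at x2
    -- key convexity inequality
    set u1 := (x1 - y1) / t with hu1
    set u2 := (x1 - y2) / t with hu2
    set v1 := (x2 - y1) / t with hv1
    set v2 := (x2 - y2) / t with hv2
    have hIcc : ∀ x y : ℝ, y ∈ Set.Icc (x - b * t) (x - a * t) →
        (x - y) / t ∈ Set.Icc a b := by
      intro x y hy
      constructor
      · rw [le_div_iff₀ ht]; nlinarith [hy.2]
      · rw [div_le_iff₀ ht]; nlinarith [hy.1]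
    have hu1m : u1 ∈ Set.Icc a b := hIcc x1 y1 h1
    have hu2m : u2 ∈ Set.Icc a b := hIcc x1 y2 hy2mem
    have hv1m : v1 ∈ Set.Icc a b := hIcc x2 y1 hy1mem
    have hv2m : v2 ∈ Set.Icc a b := hIcc x2 y2 h2
    have hsum : u1 + v2 = v1 + u2 := by
      rw [hu1, hu2, hv1, hv2]
      ring
    have hu1v2 : u1 < v2 := by
      rw [hu1, hv2, div_lt_div_iff₀ ht ht]
      nlinarith
    -- λ := (v2 - v1)/(v2 - u1), v1 = λ • u1 + (1-λ) • v2, u2 = (1-λ) • u1 + λ • v2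
    set lam := (v2 - v1) / (v2 - u1) with hlam
    have hd : 0 < v2 - u1 := by linarith
    have hv1le : u1 ≤ v1 := by
      rw [hu1, hv1, div_le_div_iff₀ ht ht]; nlinarith
    have hv1le' : v1 ≤ v2 := by
      rw [hv1, hv2, div_le_div_iff₀ ht ht]; nlinarith
    have hlam0 : 0 ≤ lam := div_nonneg (by linarith) hd.le
    have hlam1 : lam ≤ 1 := by
      rw [hlam, div_le_one hd]; linarith
    have hlamd : lam * (v2 - u1) = v2 - v1 := by
      rw [hlam, div_mul_cancel₀ _ hd.ne']
    clear_value lam u1 u2 v1 v2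
    have hv1eq : v1 = lam * u1 + (1 - lam) * v2 := by linear_combination hlamd
    have hu2eq : u2 = (1 - lam) * u1 + lam * v2 := by
      have : u2 = u1 + v2 - v1 := by linarith
      rw [this, hv1eq]; ring
    have key1 : L v1 ≤ lam * L u1 + (1 - lam) * L v2 := by
      have := hLconv.2 hu1m hv2m hlam0 (sub_nonneg.mpr hlam1) (by ring)
      rw [smul_eq_mul, smul_eq_mul, smul_eq_mul, smul_eq_mul, ← hv1eq] at this
      exact this
    have key2 : L u2 ≤ (1 - lam) * L u1 + lam * L v2 := by
      have := hLconv.2 hu1m hv2m (sub_nonneg.mpr hlam1) hlam0 (by ring)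
      rw [smul_eq_mul, smul_eq_mul, smul_eq_mul, smul_eq_mul, ← hu2eq] at this
      exact this
    have keyL : L v1 + L u2 ≤ L u1 + L v2 := by nlinarith
    -- from minimality at x1
    have hmin1 : t * L u1 + g y1 ≤ t * L u2 + g y2 := by
      rw [hu1, hu2]; exact hmin x1 y2 hy2mem
    -- y1 is a minimizer at x2 too: compare with y2, then with any z via y2
    have hy1min : ∀ z ∈ Set.Icc (x2 - b * t) (x2 - a * t),
        t * L ((x2 - y1) / t) + g y1 ≤ t * L ((x2 - z) / t) + g z := by
      intro z hz
      rw [← hv1]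
      calc t * L v1 + g y1 ≤ t * L v2 + g y2 := by nlinarith
        _ ≤ t * L ((x2 - z) / t) + g z := by rw [hv2]; exact hmin x2 z hz
    have := hgreatest x2 y1 hy1mem hy1min
    exact absurd this (not_le.mpr hlt)
  -- Now compose BV with monotone map.
  have := eVariationOn.comp_le_of_monotoneOn (deriv g) ystar
    (hmono.monotoneOn Set.univ) (Set.mapsTo_univ ystar Set.univ)
  exact ne_top_of_le_ne_top hBV this
end

section
/- Let α < β < γ and y_m be real numbers, and let G : ℝ → ℝ satisfy G(y) = G(y_m) + α·(y − y_m) for all y ≤ y_m and G(y) = G(y_m) + γ·(y − y_m) for all y ≥ y_m; let g : ℝ → ℝ be g(y) := β·y. Then: (i) y_m is the unique minimizer of G − g over ℝ. Moreover, let A ⊆ ℝ be a compact set with y_m ∈ A, let ε > 0 and C₁ > 0, and let G_ε : ℝ → ℝ satisfy |G_ε(y) − G(y)| ≤ C₁·ε for all y ∈ A. Then (ii) every minimizer y_m^ε of G_ε − g over A satisfies |y_m^ε − y_m| ≤ ( 2·C₁ / min(β − α, γ − β) )·ε. -/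
/-- Lemma 5.1 (Smoothing): for a v-shaped piecewise linear `G` with slopes
`α < γ` and the linear function `g(y) = β y` with `α < β < γ`, the point `y_m`
is the unique minimizer of `G - g`, and any minimizer over a compact set `A`
of an `ε`-uniform perturbation `G_ε - g` is within `(2 C₁ / min(β-α, γ-β)) ε`
of `y_m`. -/
theorem stmt17 (α β γ y_m : ℝ) (hαβ : α < β) (hβγ : β < γ) (G : ℝ → ℝ)
    (hGleft : ∀ y ≤ y_m, G y = G y_m + α * (y - y_m))
    (hGright : ∀ y ≥ y_m, G y = G y_m + γ * (y - y_m)) :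
    (∀ y : ℝ, y ≠ y_m → G y_m - β * y_m < G y - β * y) ∧
    (∀ A : Set ℝ, IsCompact A → y_m ∈ A → ∀ ε > (0 : ℝ), ∀ C₁ > (0 : ℝ),
      ∀ Gε : ℝ → ℝ, (∀ y ∈ A, |Gε y - G y| ≤ C₁ * ε) →
      ∀ y_mε ∈ A, (∀ y ∈ A, Gε y_mε - β * y_mε ≤ Gε y - β * y) →
        |y_mε - y_m| ≤ (2 * C₁ / min (β - α) (γ - β)) * ε) := by
  set m : ℝ := min (β - α) (γ - β) with hm
  have hm0 : 0 < m := lt_min (by linarith) (by linarith)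
  have key : ∀ y : ℝ, m * |y - y_m| ≤ (G y - β * y) - (G y_m - β * y_m) := by
    intro y
    rcases le_total y y_m with h | h
    · rw [hGleft y h, abs_of_nonpos (by linarith)]
      have h1 : m ≤ β - α := min_le_left _ _
      nlinarith
    · rw [hGright y h, abs_of_nonneg (by linarith)]
      have h1 : m ≤ γ - β := min_le_right _ _
      nlinarith
  constructor
  · intro y hy
    have := key y
    have : 0 < |y - y_m| := abs_pos.mpr (sub_ne_zero.mpr hy)
    nlinarith [key y]
  · intro A _ hymA ε hε C₁ hC₁ Gε hGε y_mε hyA hmin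
    have h1 := hGε y_mε hyA
    have h2 := hGε y_m hymA
    have h3 := hmin y_m hymA
    have h4 := key y_mε
    rw [abs_le] at h1 h2
    have hstep : m * |y_mε - y_m| ≤ 2 * C₁ * ε := by nlinarith
    rw [div_mul_eq_mul_div, le_div_iff₀ hm0]
    nlinarith [abs_nonneg (y_mε - y_m)]
end
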